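/- For every integer n ≥ 1, the glued-stair Schur multiple zeta value satisfies the 2×2 Jacobi–Trudi identity G_{1,3}(n) = A_{1,3}(n) · B_{1,3}(n−1) − S_{1,3}(n) · S⋆_{1,3}(n). -/

import Mathlib

open Filter

/-! ## Skew Young diagrams, tableaux and Schur sums -/

/-- `D` is the skew Young diagram `D(λ/μ)` of the partition pair `lam/mu` with `h` rows:
`D(λ/μ) = {(i,j) : 1 ≤ i ≤ h, μ_i < j ≤ λ_i}`. -/
def IsSkewDiagramOf (D : Finset (ℤ × ℤ)) (h : ℕ) (lam mu : ℕ → ℕ) : Prop :=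
  (∀ i, 1 ≤ i → i < h → lam (i + 1) ≤ lam i) ∧
  (∀ i, 1 ≤ i → i ≤ h → 1 ≤ lam i) ∧
  (∀ i, 1 ≤ i → i < h → mu (i + 1) ≤ mu i) ∧
  (∀ i, 1 ≤ i → i ≤ h → mu i ≤ lam i) ∧
  (∀ p : ℤ × ℤ, p ∈ D ↔ ∃ i j : ℕ, 1 ≤ i ∧ i ≤ h ∧ mu i < j ∧ j ≤ lam i ∧
      p = ((i : ℤ), (j : ℤ)))

/-- `D` is a skew Young diagram (in its original position, rows `1,…,h`). -/
def IsSkewDiagram (D : Finset (ℤ × ℤ)) : Prop :=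
  ∃ h lam mu, IsSkewDiagramOf D h lam mu

/-- Translation of a diagram by a vector. -/
def translateD (D : Finset (ℤ × ℤ)) (v : ℤ × ℤ) : Finset (ℤ × ℤ) :=
  D.image fun p => (p.1 + v.1, p.2 + v.2)

/-- `D` has the shape of a skew Young diagram (some translate of it is one). -/
def IsSkewShape (D : Finset (ℤ × ℤ)) : Prop :=
  ∃ v : ℤ × ℤ, IsSkewDiagram (translateD D v)

/-- `D` contains no 2 × 2 square of boxes. -/
def NoTwoByTwo (D : Finset (ℤ × ℤ)) : Prop :=
  ∀ p : ℤ × ℤ, ¬(p ∈ D ∧ (p.1 + 1, p.2) ∈ D ∧ (p.1, p.2 + 1) ∈ D ∧ (p.1 + 1, p.2 + 1) ∈ D)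

/-- A ribbon is a skew diagram (up to translation) containing no 2 × 2 square. -/
def IsRibbon (D : Finset (ℤ × ℤ)) : Prop := IsSkewShape D ∧ NoTwoByTwo D

/-- Two boxes share a common edge. -/
def AdjBox (p q : ℤ × ℤ) : Prop :=
  (p.1 = q.1 ∧ (p.2 = q.2 + 1 ∨ q.2 = p.2 + 1)) ∨
  (p.2 = q.2 ∧ (p.1 = q.1 + 1 ∨ q.1 = p.1 + 1))

/-- Any two boxes of `D` are joined by a chain of boxes of `D` sharing common edges. -/
def EdgeConnected (D : Finset (ℤ × ℤ)) : Prop :=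
  ∀ p ∈ D, ∀ q ∈ D, Relation.ReflTransGen (fun x y => x ∈ D ∧ y ∈ D ∧ AdjBox x y) p q

/-- The content set `c(D) = {j - i : (i,j) ∈ D}` of a diagram. -/
def contentSet (D : Finset (ℤ × ℤ)) : Finset ℤ := D.image fun p => p.2 - p.1

/-- `R'` is a subribbon of `R`: some diagonal translate of `R'` is contained in `R`
(diagonal translation preserves contents). -/
def IsSubribbon (R' R : Finset (ℤ × ℤ)) : Prop := ∃ t : ℤ, translateD R' (t, t) ⊆ R

/-- `θ` is an outside decomposition of the skew diagram `D`: the `θ i` are pairwise disjoint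
nonempty ribbons whose union is `D`, each having its starting box (the box of minimal
content) on the left or bottom perimeter and its ending box (the box of maximal content)
on the top or right perimeter of `D`. -/
def IsOutsideDecomp (D : Finset (ℤ × ℤ)) {n : ℕ} (θ : Fin n → Finset (ℤ × ℤ)) : Prop :=
  (∀ i, IsRibbon (θ i) ∧ (θ i).Nonempty) ∧
  (∀ i j, i ≠ j → Disjoint (θ i) (θ j)) ∧
  (D = Finset.univ.biUnion θ) ∧
  (∀ i, ∀ p ∈ θ i, (∀ q ∈ θ i, p.2 - p.1 ≤ q.2 - q.1) →
      ((p.1, p.2 - 1) ∉ D ∨ (p.1 + 1, p.2) ∉ D)) ∧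
  (∀ i, ∀ p ∈ θ i, (∀ q ∈ θ i, q.2 - q.1 ≤ p.2 - p.1) →
      ((p.1 - 1, p.2) ∉ D ∨ (p.1, p.2 + 1) ∉ D))

open scoped Classical in
/-- The generalized Schur sum `S_f^M(k)`: the sum over all semi-standard fillings `m` of `D`
with positive entries `< M` of `∏_{p ∈ D} f(m_p, k_p)`.  (For `D = ∅` this is `1`.) -/
noncomputable def SchurSum {A : Type*} [CommRing A] (f : ℕ → ℕ → A)
    (D : Finset (ℤ × ℤ)) (k : ℤ × ℤ → ℕ) (M : ℕ) : A :=
  ∑ m ∈ Finset.univ.filter (fun m : {x // x ∈ D} → Fin M =>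
      (∀ p, 1 ≤ (m p : ℕ)) ∧
      ∀ p q : {x // x ∈ D},
        ((q : ℤ × ℤ).1 = (p : ℤ × ℤ).1 + 1 ∧ (q : ℤ × ℤ).2 = (p : ℤ × ℤ).2 →
          (m p : ℕ) < (m q : ℕ)) ∧
        ((q : ℤ × ℤ).1 = (p : ℤ × ℤ).1 ∧ (q : ℤ × ℤ).2 = (p : ℤ × ℤ).2 + 1 →
          (m p : ℕ) ≤ (m q : ℕ))),
    ∏ p : {x // x ∈ D}, f (m p : ℕ) (k (p : ℤ × ℤ))

/-- The truncated Schur multiple zeta value `ζ_M(k)`. -/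
noncomputable def zetaTrunc (D : Finset (ℤ × ℤ)) (k : ℤ × ℤ → ℕ) (M : ℕ) : ℝ :=
  SchurSum (fun m d => ((m : ℝ) ^ d)⁻¹) D k M

/-- `Z ∈ ℝ[T]` is the (harmonic) regularization of the Schur multiple zeta value of the
tableau `k` on `D`:  `ζ_M(k) = Z(log M + γ) + O(log^J M / M)` as `M → ∞`. -/
def IsRegSchur (D : Finset (ℤ × ℤ)) (k : ℤ × ℤ → ℕ) (Z : Polynomial ℝ) : Prop :=
  ∃ (J : ℕ) (C : ℝ), 0 < C ∧ ∀ M : ℕ, 2 ≤ M →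
    |zetaTrunc D k M - Z.eval (Real.log M + Real.eulerMascheroniConstant)| ≤
      C * (Real.log M) ^ J / M

/-- `k` (given by its constant entries along diagonals) is admissible: every corner entry
is at least 2. -/
def Admissible (D : Finset (ℤ × ℤ)) (k : ℤ × ℤ → ℕ) : Prop :=
  ∀ p ∈ D, (p.1, p.2 + 1) ∉ D → (p.1 + 1, p.2) ∉ D → 2 ≤ k p

/-- Checkerboard style: every entry of the diagonal filling `kc` on `D` is `a` or `b`, and
boxes whose contents differ by `1` carry different entries. -/
def Checkerboard (D : Finset (ℤ × ℤ)) (kc : ℤ → ℕ) (a b : ℕ) : Prop :=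
  (∀ p ∈ D, kc (p.2 - p.1) = a ∨ kc (p.2 - p.1) = b) ∧
  ∀ p ∈ D, ∀ q ∈ D, q.2 - q.1 = p.2 - p.1 + 1 → kc (q.2 - q.1) ≠ kc (p.2 - p.1)

/-! ## Stairs -/

/-- The `A`-type stair with `2n+1` boxes: starting from its bottom-left box, `n` repetitions
of (one step right, one step up). -/
def stairA (n : ℕ) : Finset (ℤ × ℤ) :=
  ((Finset.range (n + 1)).image fun t : ℕ => (-(t : ℤ), (t : ℤ))) ∪
    ((Finset.range n).image fun t : ℕ => (-(t : ℤ), (t : ℤ) + 1))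

/-- The `B`-type stair with `2n+1` boxes: `n` repetitions of (one step up, one step right). -/
def stairB (n : ℕ) : Finset (ℤ × ℤ) :=
  ((Finset.range (n + 1)).image fun t : ℕ => (-(t : ℤ), (t : ℤ))) ∪
    ((Finset.range n).image fun t : ℕ => (-(t : ℤ) - 1, (t : ℤ)))

/-- The `S`-type stair with `2n` boxes: one step up followed by `n-1` repetitions of
(one step right, one step up). -/
def stairS (n : ℕ) : Finset (ℤ × ℤ) :=
  ((Finset.range n).image fun t : ℕ => (-(t : ℤ), (t : ℤ))) ∪
    ((Finset.range n).image fun t : ℕ => (-(t : ℤ) - 1, (t : ℤ)))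

/-- The `S⋆`-type stair with `2n` boxes: one step right followed by `n-1` repetitions of
(one step up, one step right). -/
def stairSstar (n : ℕ) : Finset (ℤ × ℤ) :=
  ((Finset.range n).image fun t : ℕ => (-(t : ℤ), (t : ℤ))) ∪
    ((Finset.range n).image fun t : ℕ => (-(t : ℤ), (t : ℤ) + 1))

/-- The alternating filling putting `a` on boxes of even content and `b` on boxes of odd
content (so along a stair starting at content `0` the entries read `a, b, a, b, …`). -/
def fillAB (a b : ℕ) (p : ℤ × ℤ) : ℕ := if (p.2 - p.1) % 2 = 0 then a else b

/-- The tableau `kc` (constant on diagonals) on `D` is tessellated purely by the stairs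
`stair n` (sizes `≥ lo`) with fillings `fill`: `D` is partitioned into translates of the
stairs, and on each piece the entries of `kc` coincide with the filling of the stair. -/
def Tessellates (D : Finset (ℤ × ℤ)) (kc : ℤ → ℕ)
    (stair : ℕ → Finset (ℤ × ℤ)) (fill : ℤ × ℤ → ℕ) (lo : ℕ) : Prop :=
  ∃ (N : ℕ) (sz : Fin N → ℕ) (off : Fin N → ℤ × ℤ),
    (∀ i, lo ≤ sz i) ∧
    (∀ i j, i ≠ j →
      Disjoint (translateD (stair (sz i)) (off i)) (translateD (stair (sz j)) (off j))) ∧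
    D = Finset.univ.biUnion (fun i => translateD (stair (sz i)) (off i)) ∧
    ∀ i, ∀ p ∈ stair (sz i), kc ((p.2 + (off i).2) - (p.1 + (off i).1)) = fill p

/-- The diagram of the gluing `G_{1,3}(n)` of a `B`-stair of size `n-1` on top of an
`A`-stair of size `n`. -/
def Gdiagram (n : ℕ) : Finset (ℤ × ℤ) :=
  translateD (stairA n) ((n : ℤ) + 1, 1) ∪ translateD (stairB (n - 1)) ((n : ℤ), 1)

/-- The checkerboard filling of `G_{1,3}(n)`: entry `1` on boxes whose content has the same
parity as `n`, entry `3` otherwise. -/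
def fillG (n : ℕ) (p : ℤ × ℤ) : ℕ := if (p.2 - p.1 - (n : ℤ)) % 2 = 0 then 1 else 3

/-! ## Multiple zeta values -/

/-- Auxiliary truncated multiple zeta sum: `Σ_{lb < m₁ < ⋯ < m_r < M} ∏ m_i^{-k_i}`. -/
noncomputable def mzvAux (M : ℕ) : ℕ → List ℕ → ℝ
  | _, [] => 1
  | lb, k :: ks => ∑ m ∈ Finset.Ioo lb M, ((m : ℝ) ^ k)⁻¹ * mzvAux M m ks

/-- The truncated multiple zeta value `ζ_M(k₁,…,k_r) = Σ_{0 < m₁ < ⋯ < m_r < M} ∏ m_i^{-k_i}`. -/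
noncomputable def mzvTrunc (ks : List ℕ) (M : ℕ) : ℝ := mzvAux M 0 ks

/-- Auxiliary truncated multiple zeta star sum: `Σ_{lb ≤ m₁ ≤ ⋯ ≤ m_r < M} ∏ m_i^{-k_i}`. -/
noncomputable def mzvStarAux (M : ℕ) : ℕ → List ℕ → ℝ
  | _, [] => 1
  | lb, k :: ks => ∑ m ∈ Finset.Ico lb M, ((m : ℝ) ^ k)⁻¹ * mzvStarAux M m ks

/-- The truncated multiple zeta star value
`ζ⋆_M(k₁,…,k_r) = Σ_{0 < m₁ ≤ ⋯ ≤ m_r < M} ∏ m_i^{-k_i}`. -/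
noncomputable def mzvStarTrunc (ks : List ℕ) (M : ℕ) : ℝ := mzvStarAux M 1 ks

/-- `Z ∈ ℝ[T]` is the harmonic (Ihara–Kaneko–Zagier) regularization of the multiple zeta
value of index `ks`. -/
def IsRegMZV (ks : List ℕ) (Z : Polynomial ℝ) : Prop :=
  ∃ (J : ℕ) (C : ℝ), 0 < C ∧ ∀ M : ℕ, 2 ≤ M →
    |mzvTrunc ks M - Z.eval (Real.log M + Real.eulerMascheroniConstant)| ≤
      C * (Real.log M) ^ J / M

/-- The Riemann zeta value `ζ(s) = Σ_{m ≥ 1} m^{-s}`. -/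
noncomputable def rzeta (s : ℕ) : ℝ := ∑' m : ℕ, (((m : ℝ) + 1) ^ s)⁻¹


namespace JT

/-- Pattern of an `A`-type chain (also `S⋆`): even step `≤`, odd step strict decrease. -/
def PAseq (L : ℕ) (x : ℕ → ℕ) : Prop :=
  ∀ i, i + 1 < L → (i % 2 = 0 → x i ≤ x (i+1)) ∧ (i % 2 = 1 → x (i+1) < x i)

/-- Pattern of a `B`-type chain (also `S`): even step strict decrease, odd step `≤`. -/
def PBseq (L : ℕ) (x : ℕ → ℕ) : Prop :=
  ∀ i, i + 1 < L → (i % 2 = 0 → x (i+1) < x i) ∧ (i % 2 = 1 → x i ≤ x (i+1))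

/-- The gluing constraints of `G`. -/
def Gcross (n : ℕ) (a b : ℕ → ℕ) : Prop :=
  ∀ j, j + 2 ≤ 2*n → j % 2 = 0 → b j < a j ∧ b j ≤ a (j+2)

def CrossAt (n : ℕ) (a b : ℕ → ℕ) (r : ℕ) : Prop :=
  (r % 2 = 0 → (1 ≤ r → b (r-1) ≤ a (r+1)) ∧ (r + 2 ≤ 2*n → a r ≤ b r)) ∧
  (r % 2 = 1 → (a (r+1) < b (r-1)) ∧ (r + 2 ≤ 2*n → b r < a r))

def UncrossAt (n : ℕ) (s u : ℕ → ℕ) (r : ℕ) : Prop :=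
  (r % 2 = 0 → (u r ≤ s r) ∧ (1 ≤ r → r + 2 ≤ 2*n → s (r-1) ≤ u (r+1))) ∧
  (r % 2 = 1 → (s r < u r) ∧ (r + 2 ≤ 2*n → u (r+1) < s (r-1)))

def swS (a b : ℕ → ℕ) (r i : ℕ) : ℕ := if i < r then b i else a (i+1)
def swU (a b : ℕ → ℕ) (r i : ℕ) : ℕ := if i ≤ r then a i else b (i-1)
def unA (s u : ℕ → ℕ) (r i : ℕ) : ℕ := if i ≤ r then u i else s (i-1)
def unB (s u : ℕ → ℕ) (r j : ℕ) : ℕ := if j < r then s j else u (j+1)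

lemma swS_lt (a b : ℕ → ℕ) (r i : ℕ) (h : i < r) : swS a b r i = b i := if_pos h
lemma swS_ge (a b : ℕ → ℕ) (r i : ℕ) (h : r ≤ i) : swS a b r i = a (i+1) := if_neg (by omega)
lemma swU_le (a b : ℕ → ℕ) (r i : ℕ) (h : i ≤ r) : swU a b r i = a i := if_pos h
lemma swU_gt (a b : ℕ → ℕ) (r i : ℕ) (h : r < i) : swU a b r i = b (i-1) := if_neg (by omega)
lemma unA_le (s u : ℕ → ℕ) (r i : ℕ) (h : i ≤ r) : unA s u r i = u i := if_pos h
lemma unA_gt (s u : ℕ → ℕ) (r i : ℕ) (h : r < i) : unA s u r i = s (i-1) := if_neg (by omega)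
lemma unB_lt (s u : ℕ → ℕ) (r j : ℕ) (h : j < r) : unB s u r j = s j := if_pos h
lemma unB_ge (s u : ℕ → ℕ) (r j : ℕ) (h : r ≤ j) : unB s u r j = u (j+1) := if_neg (by omega)

lemma unA_swS (a b : ℕ → ℕ) (r i : ℕ) : unA (swS a b r) (swU a b r) r i = a i := by
  rcases le_or_gt i r with h | h
  · rw [unA_le _ _ _ _ h, swU_le _ _ _ _ h]
  · rw [unA_gt _ _ _ _ h, swS_ge _ _ _ _ (by omega)]
    congr 1 <;> omega

lemma unB_swU (a b : ℕ → ℕ) (r j : ℕ) : unB (swS a b r) (swU a b r) r j = b j := by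
  rcases lt_or_ge j r with h | h
  · rw [unB_lt _ _ _ _ h, swS_lt _ _ _ _ h]
  · rw [unB_ge _ _ _ _ h, swU_gt _ _ _ _ (by omega)]
    congr 1 <;> omega

lemma swS_unA (s u : ℕ → ℕ) (r i : ℕ) : swS (unA s u r) (unB s u r) r i = s i := by
  rcases lt_or_ge i r with h | h
  · rw [swS_lt _ _ _ _ h, unB_lt _ _ _ _ h]
  · rw [swS_ge _ _ _ _ h, unA_gt _ _ _ _ (by omega)]
    congr 1 <;> omega

lemma swU_unB (s u : ℕ → ℕ) (r i : ℕ) : swU (unA s u r) (unB s u r) r i = u i := by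
  rcases le_or_gt i r with h | h
  · rw [swU_le _ _ _ _ h, unA_le _ _ _ _ h]
  · rw [swU_gt _ _ _ _ h, unB_ge _ _ _ _ (by omega)]
    congr 1 <;> omega

/-- Every `(S, S⋆)`-pair has an uncrossing point. -/
lemma exists_uncrossAt {n : ℕ} (hn : 1 ≤ n) {s u : ℕ → ℕ}
    (hs : PBseq (2*n) s) (hu : PAseq (2*n) u) :
    ∃ r, r < 2*n ∧ UncrossAt n s u r := by
  by_contra h
  push_neg at h
  have Q : ∀ i, i ≤ 2*n - 1 → 1 ≤ i → s (i-1) < u i := by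
    intro i
    induction i with
    | zero => omega
    | succ k ih =>
      intro hk _
      simp only [Nat.add_sub_cancel]
      rcases Nat.eq_zero_or_pos k with rfl | hk1
      · -- base case : from ¬UncrossAt 0
        have h0 := h 0 (by omega)
        have hsu : s 0 < u 0 := by
          by_contra hc; push_neg at hc
          exact h0 ⟨fun _ => ⟨hc, by omega⟩, fun hp => by omega⟩
        have := (hu 0 (by omega)).1 rfl
        simpa using lt_of_lt_of_le hsu this
      · have hQ := ih (by omega) hk1
        have hk2 : k + 2 ≤ 2*n := by omega
        have hnk := h k (by omega)
        rcases Nat.mod_two_eq_zero_or_one k with hp | hp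
        · have hupat : u k ≤ u (k+1) := (hu k (by omega)).1 hp
          by_cases hc : u k ≤ s k
          · by_cases hc2 : s (k-1) ≤ u (k+1)
            · exact absurd ⟨fun _ => ⟨hc, fun _ _ => hc2⟩, fun hq => by omega⟩ hnk
            · push_neg at hc2; omega
          · push_neg at hc; omega
        · have hspat : s k < s (k-1) := by
            have := (hs (k-1) (by omega)).1 (by omega)
            have hk' : k - 1 + 1 = k := by omega
            rwa [hk'] at this
          by_cases hc : s k < u k
          · by_cases hc2 : u (k+1) < s (k-1)
            · exact absurd ⟨fun hq => by omega, fun _ => ⟨hc, fun _ => hc2⟩⟩ hnk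
            · push_neg at hc2; omega
          · push_neg at hc; omega
  have hQ := Q (2*n-1) (by omega) (by omega)
  have hlast := h (2*n-1) (by omega)
  have hc : ¬ s (2*n-1) < u (2*n-1) := by
    intro hc
    exact hlast ⟨fun hq => by omega, fun _ => ⟨hc, fun hq => by omega⟩⟩
  push_neg at hc
  have hspat : s (2*n-1) < s (2*n-1-1) := by
    have := (hs (2*n-2) (by omega)).1 (by omega)
    have e1 : 2*n-2+1 = 2*n-1 := by omega
    have e2 : 2*n-1-1 = 2*n-2 := by omega
    rw [e1] at this; rw [e2]; exact this
  omega

/-- No crossing point implies the gluing constraints. -/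
lemma gcross_of_no_crossAt {n : ℕ} (hn : 1 ≤ n) {a b : ℕ → ℕ}
    (ha : PAseq (2*n+1) a) (hb : PBseq (2*n-1) b)
    (h : ∀ r, r < 2*n → ¬ CrossAt n a b r) : Gcross n a b := by
  have P : ∀ i, i ≤ 2*n - 1 → 1 ≤ i → b (i-1) < a i := by
    intro i
    induction i with
    | zero => omega
    | succ k ih =>
      intro hk _
      simp only [Nat.add_sub_cancel]
      rcases Nat.eq_zero_or_pos k with rfl | hk1
      · have h0 := h 0 (by omega)
        have hb0 : b 0 < a 0 := by
          by_contra hc; push_neg at hc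
          exact h0 ⟨fun _ => ⟨by omega, fun _ => hc⟩, fun hp => by omega⟩
        have := (ha 0 (by omega)).1 rfl
        simpa using lt_of_lt_of_le hb0 this
      · have hP := ih (by omega) hk1
        have hk2 : k + 2 ≤ 2*n := by omega
        have hnk := h k (by omega)
        rcases Nat.mod_two_eq_zero_or_one k with hp | hp
        · have hapat : a k ≤ a (k+1) := (ha k (by omega)).1 hp
          by_cases hc : b (k-1) ≤ a (k+1)
          · by_cases hc2 : a k ≤ b k
            · exact absurd ⟨fun _ => ⟨fun _ => hc, fun _ => hc2⟩, fun hq => by omega⟩ hnk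
            · push_neg at hc2; omega
          · push_neg at hc; omega
        · have hbpat : b k < b (k-1) := by
            have := (hb (k-1) (by omega)).1 (by omega)
            have hk' : k - 1 + 1 = k := by omega
            rwa [hk'] at this
          by_cases hc : a (k+1) < b (k-1)
          · by_cases hc2 : b k < a k
            · exact absurd ⟨fun hq => by omega, fun _ => ⟨hc, fun _ => hc2⟩⟩ hnk
            · push_neg at hc2; omega
          · push_neg at hc; omega
  intro j hj hjp
  have hjlast : j ≤ 2*n - 2 := by omega
  constructor
  · -- b j < a j
    have hj0 := h j (by omega)
    rcases Nat.eq_zero_or_pos j with rfl | hj1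
    · by_contra hc; push_neg at hc
      exact hj0 ⟨fun _ => ⟨by omega, fun _ => hc⟩, fun hp => by omega⟩
    · have hP := P j (by omega) hj1
      have hapat : a j ≤ a (j+1) := (ha j (by omega)).1 hjp
      by_cases hc : b j < a j
      · exact hc
      · push_neg at hc
        have hc1 : b (j-1) ≤ a (j+1) := by omega
        exact absurd ⟨fun _ => ⟨fun _ => hc1, fun _ => hc⟩, fun hq => by omega⟩ hj0
  · -- b j ≤ a (j+2)
    have hj1 := h (j+1) (by omega)
    by_cases hc : a (j+1+1) < b j
    · exfalso
      have hP := P (j+1) (by omega) (by omega)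
      simp only [Nat.add_sub_cancel] at hP
      -- hP : b j < a (j+1)
      by_cases hc2 : b (j+1) < a (j+1)
      · refine hj1 ⟨fun hq => by omega, fun _ => ⟨?_, fun _ => hc2⟩⟩
        simpa only [Nat.add_sub_cancel] using hc
      · push_neg at hc2
        have hbpat : b (j+1) < b j := by
          by_cases hr : j + 3 ≤ 2*n
          · exact (hb j (by omega)).1 hjp
          · -- j+1+2 > 2n, so second clause vacuous; contradiction from first alone
            exact absurd (hj1 ⟨fun hq => by omega,
              fun _ => ⟨by simpa only [Nat.add_sub_cancel] using hc, fun hq => by omega⟩⟩) (fun x => x)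
        omega
    · push_neg at hc
      have e : j + 1 + 1 = j + 2 := by omega
      rwa [e] at hc
end JT

namespace JT

lemma no_crossAt_of_gcross {n : ℕ} {a b : ℕ → ℕ}
    (hg : Gcross n a b) : ∀ r, r < 2*n → ¬ CrossAt n a b r := by
  intro r hr hcr
  rcases Nat.mod_two_eq_zero_or_one r with hp | hp
  · have h2 := (hcr.1 hp).2 (by omega)
    have := (hg r (by omega) hp).1
    omega
  · have h1 := (hcr.2 hp).1
    have := (hg (r-1) (by omega) (by omega)).2
    have hr1 : r - 1 + 2 = r + 1 := by omega
    rw [hr1] at this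
    omega

/-- Swapping at a crossing point yields `S`,`S⋆` patterns. -/
lemma swap_patterns {n : ℕ} {a b : ℕ → ℕ} {r : ℕ} (hr : r < 2*n)
    (ha : PAseq (2*n+1) a) (hb : PBseq (2*n-1) b) (hcr : CrossAt n a b r) :
    PBseq (2*n) (swS a b r) ∧ PAseq (2*n) (swU a b r) := by
  constructor
  · intro i hi
    rcases lt_trichotomy (i+1) r with h1 | h1 | h1
    · rw [swS_lt a b r (i+1) h1, swS_lt a b r i (by omega)]
      exact hb i (by omega)
    · -- junction: i = r-1
      rw [swS_lt a b r i (by omega), swS_ge a b r (i+1) (by omega)]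
      rcases Nat.mod_two_eq_zero_or_one i with hp | hp
      · -- i even, r odd
        have hodd : r % 2 = 1 := by omega
        have := (hcr.2 hodd).1
        have e1 : r - 1 = i := by omega
        have e2 : i + 1 + 1 = r + 1 := by omega
        rw [e1] at this; rw [e2]
        exact ⟨fun _ => this, fun hq => by omega⟩
      · have heven : r % 2 = 0 := by omega
        have := (hcr.1 heven).1 (by omega)
        have e1 : r - 1 = i := by omega
        have e2 : i + 1 + 1 = r + 1 := by omega
        rw [e1] at this; rw [e2]
        exact ⟨fun hq => by omega, fun _ => this⟩
    · rw [swS_ge a b r i (by omega), swS_ge a b r (i+1) (by omega)]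
      exact ⟨fun hp => (ha (i+1) (by omega)).2 (by omega),
        fun hp => (ha (i+1) (by omega)).1 (by omega)⟩
  · intro i hi
    rcases lt_trichotomy i r with h1 | h1 | h1
    · rw [swU_le a b r i (by omega), swU_le a b r (i+1) (by omega)]
      exact ha i (by omega)
    · subst h1
      rw [swU_le a b i i (le_refl i), swU_gt a b i (i+1) (by omega)]
      simp only [Nat.add_sub_cancel]
      rcases Nat.mod_two_eq_zero_or_one i with hp | hp
      · have := (hcr.1 hp).2 (by omega)
        exact ⟨fun _ => this, fun hq => by omega⟩
      · have := (hcr.2 hp).2 (by omega)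
        exact ⟨fun hq => by omega, fun _ => this⟩
    · rw [swU_gt a b r i h1, swU_gt a b r (i+1) (by omega)]
      have e : i + 1 - 1 = i - 1 + 1 := by omega
      rw [e]
      exact ⟨fun hp => (hb (i-1) (by omega)).2 (by omega),
        fun hp => (hb (i-1) (by omega)).1 (by omega)⟩

/-- Unswapping at an uncrossing point yields `A`,`B` patterns. -/
lemma unswap_patterns {n : ℕ} {s u : ℕ → ℕ} {r : ℕ} (hr : r < 2*n)
    (hs : PBseq (2*n) s) (hu : PAseq (2*n) u) (hcr : UncrossAt n s u r) :
    PAseq (2*n+1) (unA s u r) ∧ PBseq (2*n-1) (unB s u r) := by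
  constructor
  · intro i hi
    rcases lt_trichotomy i r with h1 | h1 | h1
    · rw [unA_le s u r i (by omega), unA_le s u r (i+1) (by omega)]
      exact hu i (by omega)
    · subst h1
      rw [unA_le s u i i (le_refl i), unA_gt s u i (i+1) (by omega)]
      simp only [Nat.add_sub_cancel]
      rcases Nat.mod_two_eq_zero_or_one i with hp | hp
      · have := (hcr.1 hp).1
        exact ⟨fun _ => this, fun hq => by omega⟩
      · have := (hcr.2 hp).1
        exact ⟨fun hq => by omega, fun _ => this⟩
    · rw [unA_gt s u r i h1, unA_gt s u r (i+1) (by omega)]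
      have e : i + 1 - 1 = i - 1 + 1 := by omega
      rw [e]
      exact ⟨fun hp => (hs (i-1) (by omega)).2 (by omega),
        fun hp => (hs (i-1) (by omega)).1 (by omega)⟩
  · intro j hj
    rcases lt_trichotomy (j+1) r with h1 | h1 | h1
    · rw [unB_lt s u r (j+1) h1, unB_lt s u r j (by omega)]
      exact hs j (by omega)
    · rw [unB_lt s u r j (by omega), unB_ge s u r (j+1) (by omega)]
      rcases Nat.mod_two_eq_zero_or_one j with hp | hp
      · -- j even, r = j+1 odd
        have hodd : r % 2 = 1 := by omega
        have := (hcr.2 hodd).2 (by omega)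
        have e1 : r - 1 = j := by omega
        have e2 : j + 1 + 1 = r + 1 := by omega
        rw [e1] at this; rw [e2]
        exact ⟨fun _ => this, fun hq => by omega⟩
      · have heven : r % 2 = 0 := by omega
        have := (hcr.1 heven).2 (by omega) (by omega)
        have e1 : r - 1 = j := by omega
        have e2 : j + 1 + 1 = r + 1 := by omega
        rw [e1] at this; rw [e2]
        exact ⟨fun hq => by omega, fun _ => this⟩
    · rw [unB_ge s u r j (by omega), unB_ge s u r (j+1) (by omega)]
      exact ⟨fun hp => (hu (j+1) (by omega)).2 (by omega),
        fun hp => (hu (j+1) (by omega)).1 (by omega)⟩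

/-- The swapped pair uncrosses at `r`. -/
lemma uncrossAt_swap {n : ℕ} {a b : ℕ → ℕ} {r : ℕ} (hr : r < 2*n)
    (ha : PAseq (2*n+1) a) (hb : PBseq (2*n-1) b) :
    UncrossAt n (swS a b r) (swU a b r) r := by
  constructor
  · intro hp
    constructor
    · rw [swU_le a b r r (le_refl r), swS_ge a b r r (le_refl r)]
      exact (ha r (by omega)).1 hp
    · intro h1 h2
      rw [swS_lt a b r (r-1) (by omega), swU_gt a b r (r+1) (by omega)]
      have e : r + 1 - 1 = r - 1 + 1 := by omega
      rw [e]
      exact (hb (r-1) (by omega)).2 (by omega)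
  · intro hp
    constructor
    · rw [swU_le a b r r (le_refl r), swS_ge a b r r (le_refl r)]
      exact (ha r (by omega)).2 hp
    · intro h2
      rw [swS_lt a b r (r-1) (by omega), swU_gt a b r (r+1) (by omega)]
      have e : r + 1 - 1 = r - 1 + 1 := by omega
      rw [e]
      exact (hb (r-1) (by omega)).1 (by omega)

/-- The unswapped pair crosses at `r`. -/
lemma crossAt_unswap {n : ℕ} {s u : ℕ → ℕ} {r : ℕ} (hr : r < 2*n)
    (hs : PBseq (2*n) s) (hu : PAseq (2*n) u) :
    CrossAt n (unA s u r) (unB s u r) r := by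
  constructor
  · intro hp
    constructor
    · intro h1
      rw [unB_lt s u r (r-1) (by omega), unA_gt s u r (r+1) (by omega)]
      have := (hs (r-1) (by omega)).2 (by omega)
      have e : r + 1 - 1 = r - 1 + 1 := by omega
      rw [e]
      exact this
    · intro h2
      rw [unA_le s u r r (le_refl r), unB_ge s u r r (le_refl r)]
      exact (hu r (by omega)).1 hp
  · intro hp
    constructor
    · rw [unB_lt s u r (r-1) (by omega), unA_gt s u r (r+1) (by omega)]
      have := (hs (r-1) (by omega)).1 (by omega)
      have e : r + 1 - 1 = r - 1 + 1 := by omega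
      rw [e]
      exact this
    · intro h2
      rw [unA_le s u r r (le_refl r), unB_ge s u r r (le_refl r)]
      exact (hu r (by omega)).2 hp

/-- Above the swap point, uncrossing of the swapped pair matches crossing of the original. -/
lemma uncrossAt_swap_iff {n : ℕ} {a b : ℕ → ℕ} {r r' : ℕ} (hrr : r < r') (hr' : r' < 2*n) :
    (UncrossAt n (swS a b r) (swU a b r) r' ↔ CrossAt n a b r') := by
  have e1 : swU a b r r' = b (r'-1) := swU_gt a b r r' hrr
  have e2 : swS a b r r' = a (r'+1) := swS_ge a b r r' (by omega)
  have e4 : swU a b r (r'+1) = b (r'+1-1) := swU_gt a b r (r'+1) (by omega)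
  have e5 : r' + 1 - 1 = r' := by omega
  have e6 : r' - 1 + 1 = r' := by omega
  constructor
  · rintro ⟨x, y⟩
    constructor
    · intro hp
      have hx := x hp
      rw [e1, e2] at hx
      refine ⟨fun _ => hx.1, fun h2 => ?_⟩
      have := hx.2 (by omega) h2
      rw [e4, e5] at this
      rwa [swS_ge a b r (r'-1) (by omega), e6] at this
    · intro hp
      have hx := y hp
      rw [e1, e2] at hx
      refine ⟨hx.1, fun h2 => ?_⟩
      have := hx.2 h2
      rw [e4, e5] at this
      rwa [swS_ge a b r (r'-1) (by omega), e6] at this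
  · rintro ⟨x, y⟩
    constructor
    · intro hp
      have hx := x hp
      rw [e1, e2]
      refine ⟨hx.1 (by omega), fun _ h2 => ?_⟩
      rw [e4, e5]
      rw [swS_ge a b r (r'-1) (by omega), e6]; exact hx.2 h2
    · intro hp
      have hx := y hp
      rw [e1, e2]
      refine ⟨hx.1, fun h2 => ?_⟩
      rw [e4, e5]
      rw [swS_ge a b r (r'-1) (by omega), e6]; exact hx.2 h2

/-- Above the unswap point, crossing of the unswapped pair matches uncrossing of the original. -/
lemma crossAt_unswap_iff {n : ℕ} {s u : ℕ → ℕ} {r r' : ℕ} (hrr : r < r') (hr' : r' < 2*n) :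
    (CrossAt n (unA s u r) (unB s u r) r' ↔ UncrossAt n s u r') := by
  have e1 : unB s u r r' = u (r'+1) := unB_ge s u r r' (by omega)
  have e2 : unA s u r (r'+1) = s (r'+1-1) := unA_gt s u r (r'+1) (by omega)
  have e3 : unA s u r r' = s (r'-1) := unA_gt s u r r' hrr
  have e5 : r' + 1 - 1 = r' := by omega
  have e6 : r' - 1 + 1 = r' := by omega
  have eb : ∀ h : r' - 1 ≥ r ∨ r' - 1 < r, unB s u r (r'-1) = unB s u r (r'-1) := fun _ => rfl
  constructor
  · rintro ⟨x, y⟩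
    constructor
    · intro hp
      have hx := x hp
      rw [e2, e5, e3] at hx
      refine ⟨?_, fun h1 h2 => ?_⟩
      · have := hx.1 (by omega)
        rwa [unB_ge s u r (r'-1) (by omega), e6] at this
      · have := hx.2 h2
        rw [e1] at this
        exact this
    · intro hp
      have hx := y hp
      rw [e2, e5, e3] at hx
      refine ⟨?_, fun h2 => ?_⟩
      · have := hx.1
        rwa [unB_ge s u r (r'-1) (by omega), e6] at this
      · have := hx.2 h2
        rw [e1] at this
        exact this
  · rintro ⟨x, y⟩
    constructor
    · intro hp
      have hx := x hp
      rw [e2, e5, e3]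
      refine ⟨fun _ => ?_, fun h2 => ?_⟩
      · rw [unB_ge s u r (r'-1) (by omega), e6]; exact hx.1
      · rw [e1]; exact hx.2 (by omega) h2
    · intro hp
      have hx := y hp
      rw [e2, e5, e3]
      refine ⟨?_, fun h2 => ?_⟩
      · rw [unB_ge s u r (r'-1) (by omega), e6]; exact hx.1
      · rw [e1]; exact hx.2 h2
end JT

namespace JT
open Finset

/-- Enumeration of an `A`-type chain by contents. -/
def eA (i : ℕ) : ℤ × ℤ := (-(↑(i/2) : ℤ), (↑((i+1)/2) : ℤ))
/-- Enumeration of a `B`-type chain by contents. -/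
def eB (i : ℕ) : ℤ × ℤ := (-(↑((i+1)/2) : ℤ), (↑(i/2) : ℤ))
/-- Enumeration of the `A`-part of `G`. -/
def eGA (n i : ℕ) : ℤ × ℤ := ((n : ℤ) + 1 - ↑(i/2), 1 + (↑((i+1)/2) : ℤ))
/-- Enumeration of the `B`-part of `G`. -/
def eGB (n j : ℕ) : ℤ × ℤ := ((n : ℤ) - ↑((j+1)/2), 1 + (↑(j/2) : ℤ))

lemma mem_stairA {n : ℕ} {p : ℤ × ℤ} : p ∈ stairA n ↔ ∃ i, i < 2*n+1 ∧ eA i = p := by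
  simp only [stairA, Finset.mem_union, Finset.mem_image, Finset.mem_range]
  constructor
  · rintro (⟨t, ht, rfl⟩ | ⟨t, ht, rfl⟩)
    · refine ⟨2*t, by omega, ?_⟩
      simp only [eA, Prod.mk.injEq, neg_inj, true_and, and_true]; omega
    · refine ⟨2*t+1, by omega, ?_⟩
      simp only [eA, Prod.mk.injEq, neg_inj, true_and, and_true]; omega
  · rintro ⟨i, hi, rfl⟩
    rcases Nat.mod_two_eq_zero_or_one i with hp | hp
    · refine Or.inl ⟨i/2, by omega, ?_⟩
      simp only [eA, Prod.mk.injEq, neg_inj, true_and, and_true]; omega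
    · refine Or.inr ⟨i/2, by omega, ?_⟩
      simp only [eA, Prod.mk.injEq, neg_inj, true_and, and_true]; omega

lemma mem_stairB {m : ℕ} {p : ℤ × ℤ} : p ∈ stairB m ↔ ∃ i, i < 2*m+1 ∧ eB i = p := by
  simp only [stairB, Finset.mem_union, Finset.mem_image, Finset.mem_range]
  constructor
  · rintro (⟨t, ht, rfl⟩ | ⟨t, ht, rfl⟩)
    · refine ⟨2*t, by omega, ?_⟩
      simp only [eB, Prod.mk.injEq, neg_inj, true_and, and_true]; omega
    · refine ⟨2*t+1, by omega, ?_⟩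
      simp only [eB, Prod.mk.injEq, neg_inj, true_and, and_true]; omega
  · rintro ⟨i, hi, rfl⟩
    rcases Nat.mod_two_eq_zero_or_one i with hp | hp
    · refine Or.inl ⟨i/2, by omega, ?_⟩
      simp only [eB, Prod.mk.injEq, neg_inj, true_and, and_true]; omega
    · refine Or.inr ⟨i/2, by omega, ?_⟩
      simp only [eB, Prod.mk.injEq, neg_inj, true_and, and_true]; omega

lemma mem_stairS {n : ℕ} {p : ℤ × ℤ} : p ∈ stairS n ↔ ∃ i, i < 2*n ∧ eB i = p := by
  simp only [stairS, Finset.mem_union, Finset.mem_image, Finset.mem_range]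
  constructor
  · rintro (⟨t, ht, rfl⟩ | ⟨t, ht, rfl⟩)
    · refine ⟨2*t, by omega, ?_⟩
      simp only [eB, Prod.mk.injEq, neg_inj, true_and, and_true]; omega
    · refine ⟨2*t+1, by omega, ?_⟩
      simp only [eB, Prod.mk.injEq, neg_inj, true_and, and_true]; omega
  · rintro ⟨i, hi, rfl⟩
    rcases Nat.mod_two_eq_zero_or_one i with hp | hp
    · refine Or.inl ⟨i/2, by omega, ?_⟩
      simp only [eB, Prod.mk.injEq, neg_inj, true_and, and_true]; omega
    · refine Or.inr ⟨i/2, by omega, ?_⟩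
      simp only [eB, Prod.mk.injEq, neg_inj, true_and, and_true]; omega

lemma mem_stairSstar {n : ℕ} {p : ℤ × ℤ} : p ∈ stairSstar n ↔ ∃ i, i < 2*n ∧ eA i = p := by
  simp only [stairSstar, Finset.mem_union, Finset.mem_image, Finset.mem_range]
  constructor
  · rintro (⟨t, ht, rfl⟩ | ⟨t, ht, rfl⟩)
    · refine ⟨2*t, by omega, ?_⟩
      simp only [eA, Prod.mk.injEq, neg_inj, true_and, and_true]; omega
    · refine ⟨2*t+1, by omega, ?_⟩
      simp only [eA, Prod.mk.injEq, neg_inj, true_and, and_true]; omega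
  · rintro ⟨i, hi, rfl⟩
    rcases Nat.mod_two_eq_zero_or_one i with hp | hp
    · refine Or.inl ⟨i/2, by omega, ?_⟩
      simp only [eA, Prod.mk.injEq, neg_inj, true_and, and_true]; omega
    · refine Or.inr ⟨i/2, by omega, ?_⟩
      simp only [eA, Prod.mk.injEq, neg_inj, true_and, and_true]; omega

lemma eGA_eq (n i : ℕ) : eGA n i = ((eA i).1 + ((n:ℤ)+1), (eA i).2 + 1) := by
  simp only [eGA, eA, Prod.mk.injEq, neg_inj, true_and, and_true]; omega

lemma eGB_eq (n j : ℕ) : eGB n j = ((eB j).1 + (n:ℤ), (eB j).2 + 1) := by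
  simp only [eGB, eB, Prod.mk.injEq, neg_inj, true_and, and_true]; omega

lemma mem_Gdiagram {n : ℕ} (hn : 1 ≤ n) {p : ℤ × ℤ} :
    p ∈ Gdiagram n ↔ (∃ i, i < 2*n+1 ∧ eGA n i = p) ∨ ∃ j, j < 2*n-1 ∧ eGB n j = p := by
  unfold Gdiagram translateD
  simp only [Finset.mem_union, Finset.mem_image]
  constructor
  · rintro (⟨q, hq, rfl⟩ | ⟨q, hq, rfl⟩)
    · obtain ⟨i, hi, rfl⟩ := mem_stairA.1 hq
      exact Or.inl ⟨i, hi, by rw [eGA_eq]⟩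
    · obtain ⟨j, hj, rfl⟩ := mem_stairB.1 hq
      exact Or.inr ⟨j, by omega, by rw [eGB_eq]⟩
  · rintro (⟨i, hi, rfl⟩ | ⟨j, hj, rfl⟩)
    · exact Or.inl ⟨eA i, mem_stairA.2 ⟨i, hi, rfl⟩, (eGA_eq n i).symm⟩
    · exact Or.inr ⟨eB j, mem_stairB.2 ⟨j, by omega, rfl⟩, (eGB_eq n j).symm⟩

end JT

namespace JT
open Finset

open scoped Classical in
lemma schurSum_enum {ι : Type} [Fintype ι] [DecidableEq ι] (f : ℕ → ℕ → ℝ) (D : Finset (ℤ × ℤ))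
    (k : ℤ × ℤ → ℕ) (M : ℕ) (e : ι → ℤ × ℤ) (he : Function.Injective e)
    (hD : ∀ p, p ∈ D ↔ ∃ i, e i = p) :
    SchurSum f D k M = ∑ m ∈ Finset.univ.filter (fun m : ι → Fin M =>
      (∀ i, 1 ≤ (m i : ℕ)) ∧ ∀ i j : ι,
        (((e j).1 = (e i).1 + 1 ∧ (e j).2 = (e i).2) → (m i : ℕ) < (m j : ℕ)) ∧
        (((e j).1 = (e i).1 ∧ (e j).2 = (e i).2 + 1) → (m i : ℕ) ≤ (m j : ℕ))) ,
      ∏ i, f (m i : ℕ) (k (e i)) := by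
  classical
  have hbij : Function.Bijective (fun i : ι => (⟨e i, (hD (e i)).2 ⟨i, rfl⟩⟩ : {x // x ∈ D})) := by
    constructor
    · intro i j hij
      exact he (congrArg Subtype.val hij)
    · rintro ⟨p, hp⟩
      obtain ⟨i, rfl⟩ := (hD p).1 hp
      exact ⟨i, rfl⟩
  set E : ι ≃ {x // x ∈ D} := Equiv.ofBijective _ hbij with hE
  have hEval : ∀ i, ((E i : ℤ × ℤ)) = e i := fun i => rfl
  have h1 : ∀ p : {x // x ∈ D}, e (E.symm p) = (p : ℤ × ℤ) := fun p => by
    rw [← hEval, Equiv.apply_symm_apply]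
  unfold SchurSum
  refine Finset.sum_equiv (Equiv.arrowCongr (E.symm : {x // x ∈ D} ≃ ι) (Equiv.refl (Fin M)))
    ?_ ?_
  · intro m
    simp only [Finset.mem_filter, Finset.mem_univ, true_and, Equiv.arrowCongr_apply,
      Equiv.refl_apply, Function.comp, Equiv.symm_symm, Equiv.refl_symm]
    constructor
    · rintro ⟨hpos, hrel⟩
      refine ⟨fun i => hpos (E i), fun i j => ?_⟩
      have := hrel (E i) (E j)
      rw [hEval, hEval] at this
      exact this
    · rintro ⟨hpos, hrel⟩
      refine ⟨fun p => by simpa using hpos (E.symm p), fun p q => ?_⟩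
      have := hrel (E.symm p) (E.symm q)
      rw [h1, h1] at this
      simpa using this
  · intro m _
    rw [← Equiv.prod_comp E (fun p => f (m p : ℕ) (k (p : ℤ × ℤ)))]
    refine Finset.prod_congr rfl fun i _ => ?_
    simp only [Equiv.arrowCongr_apply, Equiv.refl_apply, Function.comp, Equiv.symm_symm]
    rw [hEval]

open scoped Classical in
lemma schurSum_enum' {ι : Type} [Fintype ι] [DecidableEq ι] (f : ℕ → ℕ → ℝ)
    (D : Finset (ℤ × ℤ)) (k : ℤ × ℤ → ℕ) (M : ℕ) (e : ι → ℤ × ℤ)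
    (he : Function.Injective e) (hD : ∀ p, p ∈ D ↔ ∃ i, e i = p)
    (P : (ι → Fin M) → Prop) [DecidablePred P]
    (hP : ∀ m : ι → Fin M,
      ((∀ i, 1 ≤ (m i : ℕ)) ∧ ∀ i j : ι,
        (((e j).1 = (e i).1 + 1 ∧ (e j).2 = (e i).2) → (m i : ℕ) < (m j : ℕ)) ∧
        (((e j).1 = (e i).1 ∧ (e j).2 = (e i).2 + 1) → (m i : ℕ) ≤ (m j : ℕ))) ↔ P m)
    (w : (ι → Fin M) → ℝ)
    (hw : ∀ m : ι → Fin M, P m → (∏ i, f (m i : ℕ) (k (e i))) = w m) :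
    SchurSum f D k M = ∑ m ∈ Finset.univ.filter P, w m := by
  classical
  rw [schurSum_enum f D k M e he hD]
  refine Finset.sum_bij' (fun m _ => m) (fun m _ => m) ?_ ?_
    (fun _ _ => rfl) (fun _ _ => rfl) ?_
  · intro m hm
    simp only [Finset.mem_filter, Finset.mem_univ, true_and] at hm ⊢
    exact (hP m).1 hm
  · intro m hm
    simp only [Finset.mem_filter, Finset.mem_univ, true_and] at hm ⊢
    exact (hP m).2 hm
  · intro m hm
    simp only [Finset.mem_filter, Finset.mem_univ, true_and] at hm
    exact hw m ((hP m).1 hm)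
end JT

namespace JT
open Finset

def k1 (i : ℕ) : ℕ := if i % 2 = 0 then 1 else 3
def k3 (i : ℕ) : ℕ := if i % 2 = 0 then 3 else 1

def nseq {L M : ℕ} (a : Fin L → Fin M) : ℕ → ℕ :=
  fun i => if h : i < L then (a ⟨i, h⟩ : ℕ) else 0

lemma nseq_of_lt {L M : ℕ} (a : Fin L → Fin M) {i : ℕ} (h : i < L) :
    nseq a i = (a ⟨i, h⟩ : ℕ) := dif_pos h

lemma nseq_fin {L M : ℕ} (a : Fin L → Fin M) (i : Fin L) : nseq a i.val = (a i : ℕ) := by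
  rw [nseq_of_lt a i.isLt]

noncomputable def W (κ : ℕ → ℕ) (x : ℕ → ℕ) (L : ℕ) : ℝ :=
  ∏ i ∈ Finset.range L, (((x i : ℕ) : ℝ) ^ κ i)⁻¹

lemma eA_inj : Function.Injective eA := by
  intro i j h
  simp only [eA, Prod.mk.injEq, neg_inj, Nat.cast_inj] at h
  omega

lemma eB_inj : Function.Injective eB := by
  intro i j h
  simp only [eB, Prod.mk.injEq, neg_inj, Nat.cast_inj] at h
  omega

lemma fill13_eA (i : ℕ) : fillAB 1 3 (eA i) = k1 i := by
  unfold fillAB eA k1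
  simp only
  rcases Nat.mod_two_eq_zero_or_one i with hp | hp
  · rw [if_pos (by omega), if_pos (by push_cast; omega)]
  · rw [if_neg (by omega), if_neg (by push_cast; omega)]

lemma fill31_eB (i : ℕ) : fillAB 3 1 (eB i) = k3 i := by
  unfold fillAB eB k3
  simp only
  rcases Nat.mod_two_eq_zero_or_one i with hp | hp
  · rw [if_pos (by omega), if_pos (by push_cast; omega)]
  · rw [if_neg (by omega), if_neg (by push_cast; omega)]

lemma fillG_eGA (n i : ℕ) : fillG n (eGA n i) = k1 i := by
  unfold fillG eGA k1
  simp only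
  rcases Nat.mod_two_eq_zero_or_one i with hp | hp
  · rw [if_pos (by omega), if_pos (by push_cast; omega)]
  · rw [if_neg (by omega), if_neg (by push_cast; omega)]

lemma fillG_eGB (n j : ℕ) : fillG n (eGB n j) = k3 j := by
  unfold fillG
  rcases Nat.mod_two_eq_zero_or_one j with hp | hp
  · have hc : ¬ (((eGB n j).2 - (eGB n j).1 - (n:ℤ)) % 2 = 0) := by
      simp only [eGB]; omega
    rw [if_neg hc]; simp [k3, hp]
  · have hc : (((eGB n j).2 - (eGB n j).1 - (n:ℤ)) % 2 = 0) := by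
      simp only [eGB]; omega
    rw [if_pos hc]; simp [k3, hp]

/-! Adjacency classification. -/

lemma eA_vert {i j : ℕ} :
    ((eA j).1 = (eA i).1 + 1 ∧ (eA j).2 = (eA i).2) ↔ (i = j + 1 ∧ j % 2 = 1) := by
  simp only [eA]; omega

lemma eA_horiz {i j : ℕ} :
    ((eA j).1 = (eA i).1 ∧ (eA j).2 = (eA i).2 + 1) ↔ (j = i + 1 ∧ i % 2 = 0) := by
  simp only [eA]; omega

lemma eB_vert {i j : ℕ} :
    ((eB j).1 = (eB i).1 + 1 ∧ (eB j).2 = (eB i).2) ↔ (i = j + 1 ∧ j % 2 = 0) := by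
  simp only [eB]; omega

lemma eB_horiz {i j : ℕ} :
    ((eB j).1 = (eB i).1 ∧ (eB j).2 = (eB i).2 + 1) ↔ (j = i + 1 ∧ i % 2 = 1) := by
  simp only [eB]; omega

lemma eGA_vert {n i j : ℕ} :
    ((eGA n j).1 = (eGA n i).1 + 1 ∧ (eGA n j).2 = (eGA n i).2) ↔ (i = j + 1 ∧ j % 2 = 1) := by
  simp only [eGA]; omega

lemma eGA_horiz {n i j : ℕ} :
    ((eGA n j).1 = (eGA n i).1 ∧ (eGA n j).2 = (eGA n i).2 + 1) ↔ (j = i + 1 ∧ i % 2 = 0) := by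
  simp only [eGA]; omega

lemma eGB_vert {n i j : ℕ} :
    ((eGB n j).1 = (eGB n i).1 + 1 ∧ (eGB n j).2 = (eGB n i).2) ↔ (i = j + 1 ∧ j % 2 = 0) := by
  simp only [eGB]; omega

lemma eGB_horiz {n i j : ℕ} :
    ((eGB n j).1 = (eGB n i).1 ∧ (eGB n j).2 = (eGB n i).2 + 1) ↔ (j = i + 1 ∧ i % 2 = 1) := by
  simp only [eGB]; omega

/-- cross vertical: `B j` sits directly above `A i` iff `i = j`, `j` even. -/
lemma eG_cross_vert {n i j : ℕ} :
    ((eGA n i).1 = (eGB n j).1 + 1 ∧ (eGA n i).2 = (eGB n j).2) ↔ (i = j ∧ j % 2 = 0) := by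
  simp only [eGA, eGB]; omega

/-- cross horizontal: `B j` sits directly left of `A i` iff `i = j + 2`, `j` even. -/
lemma eG_cross_horiz {n i j : ℕ} :
    ((eGA n i).1 = (eGB n j).1 ∧ (eGA n i).2 = (eGB n j).2 + 1) ↔ (i = j + 2 ∧ j % 2 = 0) := by
  simp only [eGA, eGB]; omega

lemma eG_cross_vert' {n i j : ℕ} :
    ¬ ((eGB n j).1 = (eGA n i).1 + 1 ∧ (eGB n j).2 = (eGA n i).2) := by
  simp only [eGB, eGA]; omega

lemma eG_cross_horiz' {n i j : ℕ} :
    ¬ ((eGB n j).1 = (eGA n i).1 ∧ (eGB n j).2 = (eGA n i).2 + 1) := by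
  simp only [eGB, eGA]; omega

end JT

namespace JT
open Finset

lemma chainA_pred {L M : ℕ} (e : ℕ → ℤ × ℤ)
    (hv : ∀ i j : ℕ, ((e j).1 = (e i).1 + 1 ∧ (e j).2 = (e i).2) ↔ (i = j + 1 ∧ j % 2 = 1))
    (hh : ∀ i j : ℕ, ((e j).1 = (e i).1 ∧ (e j).2 = (e i).2 + 1) ↔ (j = i + 1 ∧ i % 2 = 0))
    (m : Fin L → Fin M) :
    (∀ i j : Fin L,
      (((e j.val).1 = (e i.val).1 + 1 ∧ (e j.val).2 = (e i.val).2) → (m i : ℕ) < (m j : ℕ)) ∧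
      (((e j.val).1 = (e i.val).1 ∧ (e j.val).2 = (e i.val).2 + 1) → (m i : ℕ) ≤ (m j : ℕ)))
    ↔ PAseq L (nseq m) := by
  constructor
  · intro h i hi
    rw [nseq_of_lt m (show i < L by omega), nseq_of_lt m hi]
    constructor
    · intro hp
      exact (h ⟨i, by omega⟩ ⟨i+1, hi⟩).2 ((hh i (i+1)).2 ⟨rfl, hp⟩)
    · intro hp
      exact (h ⟨i+1, hi⟩ ⟨i, by omega⟩).1 ((hv (i+1) i).2 ⟨rfl, hp⟩)
  · intro h i j
    constructor
    · intro hc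
      obtain ⟨hij, hp⟩ := (hv i.val j.val).1 hc
      have hb : j.val + 1 < L := by omega
      have := (h j.val hb).2 hp
      rw [nseq_of_lt m hb, nseq_of_lt m (by omega : (j:ℕ) < L)] at this
      have e1 : (⟨j.val + 1, hb⟩ : Fin L) = i := by apply Fin.ext; simp only [Fin.val_mk]; omega
      have e2 : (⟨j.val, by omega⟩ : Fin L) = j := Fin.ext rfl
      rwa [e1, e2] at this
    · intro hc
      obtain ⟨hij, hp⟩ := (hh i.val j.val).1 hc
      have hb : i.val + 1 < L := by omega
      have := (h i.val hb).1 hp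
      rw [nseq_of_lt m hb, nseq_of_lt m (by omega : (i:ℕ) < L)] at this
      have e1 : (⟨i.val + 1, hb⟩ : Fin L) = j := by apply Fin.ext; simp only [Fin.val_mk]; omega
      have e2 : (⟨i.val, by omega⟩ : Fin L) = i := Fin.ext rfl
      rwa [e1, e2] at this

lemma chainB_pred {L M : ℕ} (e : ℕ → ℤ × ℤ)
    (hv : ∀ i j : ℕ, ((e j).1 = (e i).1 + 1 ∧ (e j).2 = (e i).2) ↔ (i = j + 1 ∧ j % 2 = 0))
    (hh : ∀ i j : ℕ, ((e j).1 = (e i).1 ∧ (e j).2 = (e i).2 + 1) ↔ (j = i + 1 ∧ i % 2 = 1))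
    (m : Fin L → Fin M) :
    (∀ i j : Fin L,
      (((e j.val).1 = (e i.val).1 + 1 ∧ (e j.val).2 = (e i.val).2) → (m i : ℕ) < (m j : ℕ)) ∧
      (((e j.val).1 = (e i.val).1 ∧ (e j.val).2 = (e i.val).2 + 1) → (m i : ℕ) ≤ (m j : ℕ)))
    ↔ PBseq L (nseq m) := by
  constructor
  · intro h i hi
    rw [nseq_of_lt m (show i < L by omega), nseq_of_lt m hi]
    constructor
    · intro hp
      exact (h ⟨i+1, hi⟩ ⟨i, by omega⟩).1 ((hv (i+1) i).2 ⟨rfl, hp⟩)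
    · intro hp
      exact (h ⟨i, by omega⟩ ⟨i+1, hi⟩).2 ((hh i (i+1)).2 ⟨rfl, hp⟩)
  · intro h i j
    constructor
    · intro hc
      obtain ⟨hij, hp⟩ := (hv i.val j.val).1 hc
      have hb : j.val + 1 < L := by omega
      have := (h j.val hb).1 hp
      rw [nseq_of_lt m hb, nseq_of_lt m (by omega : (j:ℕ) < L)] at this
      have e1 : (⟨j.val + 1, hb⟩ : Fin L) = i := by apply Fin.ext; simp only [Fin.val_mk]; omega
      have e2 : (⟨j.val, by omega⟩ : Fin L) = j := Fin.ext rfl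
      rwa [e1, e2] at this
    · intro hc
      obtain ⟨hij, hp⟩ := (hh i.val j.val).1 hc
      have hb : i.val + 1 < L := by omega
      have := (h i.val hb).2 hp
      rw [nseq_of_lt m hb, nseq_of_lt m (by omega : (i:ℕ) < L)] at this
      have e1 : (⟨i.val + 1, hb⟩ : Fin L) = j := by apply Fin.ext; simp only [Fin.val_mk]; omega
      have e2 : (⟨i.val, by omega⟩ : Fin L) = i := Fin.ext rfl
      rwa [e1, e2] at this

/-- Rewrite a `Fin`-indexed weight product as `W`. -/
lemma prod_weight {L M : ℕ} (κ : ℕ → ℕ) (m : Fin L → Fin M) :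
    ∏ i : Fin L, (((m i : ℕ) : ℝ) ^ κ i.val)⁻¹ = W κ (nseq m) L := by
  unfold W
  rw [← Fin.prod_univ_eq_prod_range (fun t => (((nseq m t : ℕ) : ℝ) ^ κ t)⁻¹) L]
  exact Finset.prod_congr rfl fun i _ => by rw [nseq_fin]

open scoped Classical in
lemma zetaA_eq (n M : ℕ) :
    zetaTrunc (stairA n) (fillAB 1 3) M =
    ∑ a ∈ Finset.univ.filter (fun a : Fin (2*n+1) → Fin M =>
        (∀ i, 1 ≤ (a i : ℕ)) ∧ PAseq (2*n+1) (nseq a)),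
      W k1 (nseq a) (2*n+1) := by
  classical
  unfold zetaTrunc
  refine schurSum_enum' _ _ _ _ (fun i : Fin (2*n+1) => eA i.val)
    (fun i j h => Fin.ext (eA_inj h))
    (fun p => by
      rw [mem_stairA]
      constructor
      · rintro ⟨i, hi, h⟩; exact ⟨⟨i, hi⟩, h⟩
      · rintro ⟨i, h⟩; exact ⟨i.val, i.isLt, h⟩)
    _ (fun x => and_congr_right (fun _ => chainA_pred eA (fun _ _ => eA_vert) (fun _ _ => eA_horiz) x))
    _ (fun x _ => ?_)
  rw [← prod_weight k1 x]
  exact Finset.prod_congr rfl fun i _ => by rw [fill13_eA]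

open scoped Classical in
lemma zetaB_eq (m M : ℕ) :
    zetaTrunc (stairB m) (fillAB 3 1) M =
    ∑ b ∈ Finset.univ.filter (fun b : Fin (2*m+1) → Fin M =>
        (∀ i, 1 ≤ (b i : ℕ)) ∧ PBseq (2*m+1) (nseq b)),
      W k3 (nseq b) (2*m+1) := by
  classical
  unfold zetaTrunc
  refine schurSum_enum' _ _ _ _ (fun i : Fin (2*m+1) => eB i.val)
    (fun i j h => Fin.ext (eB_inj h))
    (fun p => by
      rw [mem_stairB]
      constructor
      · rintro ⟨i, hi, h⟩; exact ⟨⟨i, hi⟩, h⟩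
      · rintro ⟨i, h⟩; exact ⟨i.val, i.isLt, h⟩)
    _ (fun x => and_congr_right (fun _ => chainB_pred eB (fun _ _ => eB_vert) (fun _ _ => eB_horiz) x))
    _ (fun x _ => ?_)
  rw [← prod_weight k3 x]
  exact Finset.prod_congr rfl fun i _ => by rw [fill31_eB]

open scoped Classical in
lemma zetaS_eq (n M : ℕ) :
    zetaTrunc (stairS n) (fillAB 3 1) M =
    ∑ s ∈ Finset.univ.filter (fun s : Fin (2*n) → Fin M =>
        (∀ i, 1 ≤ (s i : ℕ)) ∧ PBseq (2*n) (nseq s)),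
      W k3 (nseq s) (2*n) := by
  classical
  unfold zetaTrunc
  refine schurSum_enum' _ _ _ _ (fun i : Fin (2*n) => eB i.val)
    (fun i j h => Fin.ext (eB_inj h))
    (fun p => by
      rw [mem_stairS]
      constructor
      · rintro ⟨i, hi, h⟩; exact ⟨⟨i, hi⟩, h⟩
      · rintro ⟨i, h⟩; exact ⟨i.val, i.isLt, h⟩)
    _ (fun x => and_congr_right (fun _ => chainB_pred eB (fun _ _ => eB_vert) (fun _ _ => eB_horiz) x))
    _ (fun x _ => ?_)
  rw [← prod_weight k3 x]
  exact Finset.prod_congr rfl fun i _ => by rw [fill31_eB]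

open scoped Classical in
lemma zetaSs_eq (n M : ℕ) :
    zetaTrunc (stairSstar n) (fillAB 1 3) M =
    ∑ u ∈ Finset.univ.filter (fun u : Fin (2*n) → Fin M =>
        (∀ i, 1 ≤ (u i : ℕ)) ∧ PAseq (2*n) (nseq u)),
      W k1 (nseq u) (2*n) := by
  classical
  unfold zetaTrunc
  refine schurSum_enum' _ _ _ _ (fun i : Fin (2*n) => eA i.val)
    (fun i j h => Fin.ext (eA_inj h))
    (fun p => by
      rw [mem_stairSstar]
      constructor
      · rintro ⟨i, hi, h⟩; exact ⟨⟨i, hi⟩, h⟩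
      · rintro ⟨i, h⟩; exact ⟨i.val, i.isLt, h⟩)
    _ (fun x => and_congr_right (fun _ => chainA_pred eA (fun _ _ => eA_vert) (fun _ _ => eA_horiz) x))
    _ (fun x _ => ?_)
  rw [← prod_weight k1 x]
  exact Finset.prod_congr rfl fun i _ => by rw [fill13_eA]

end JT

namespace JT
open Finset

lemma eGA_inj (n : ℕ) : Function.Injective (eGA n) := by
  intro i j h
  simp only [eGA, Prod.mk.injEq] at h
  omega

lemma eGB_inj (n : ℕ) : Function.Injective (eGB n) := by
  intro i j h
  simp only [eGB, Prod.mk.injEq] at h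
  omega

lemma eGA_ne_eGB (n i j : ℕ) : eGA n i ≠ eGB n j := by
  intro h
  simp only [eGA, eGB, Prod.mk.injEq] at h
  omega

open scoped Classical in
lemma zetaG_eq (n M : ℕ) (hn : 1 ≤ n) :
    zetaTrunc (Gdiagram n) (fillG n) M =
    ∑ m ∈ Finset.univ.filter (fun m : (Fin (2*n+1) ⊕ Fin (2*n-1)) → Fin M =>
        (∀ x, 1 ≤ (m x : ℕ)) ∧
        PAseq (2*n+1) (nseq (fun i => m (Sum.inl i))) ∧
        PBseq (2*n-1) (nseq (fun j => m (Sum.inr j))) ∧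
        Gcross n (nseq (fun i => m (Sum.inl i))) (nseq (fun j => m (Sum.inr j)))),
      W k1 (nseq (fun i => m (Sum.inl i))) (2*n+1) *
        W k3 (nseq (fun j => m (Sum.inr j))) (2*n-1) := by
  classical
  unfold zetaTrunc
  refine schurSum_enum' _ _ _ _
    (Sum.elim (fun i : Fin (2*n+1) => eGA n i.val) (fun j : Fin (2*n-1) => eGB n j.val))
    ?_ ?_ _ ?_ _ ?_
  · rintro (i | i) (j | j) h <;> simp only [Sum.elim_inl, Sum.elim_inr] at h
    · exact congrArg Sum.inl (Fin.ext (eGA_inj n h))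
    · exact absurd h (eGA_ne_eGB n _ _)
    · exact absurd h.symm (eGA_ne_eGB n _ _)
    · exact congrArg Sum.inr (Fin.ext (eGB_inj n h))
  · intro p
    rw [mem_Gdiagram hn]
    constructor
    · rintro (⟨i, hi, h⟩ | ⟨j, hj, h⟩)
      · exact ⟨Sum.inl ⟨i, hi⟩, h⟩
      · exact ⟨Sum.inr ⟨j, hj⟩, h⟩
    · rintro ⟨(i | j), h⟩
      · exact Or.inl ⟨i.val, i.isLt, h⟩
      · exact Or.inr ⟨j.val, j.isLt, h⟩
  · intro m
    constructor
    · rintro ⟨hpos, hrel⟩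
      refine ⟨hpos, ?_, ?_, ?_⟩
      · exact (chainA_pred (eGA n) (fun _ _ => eGA_vert) (fun _ _ => eGA_horiz)
          (fun i => m (Sum.inl i))).1 (fun i j => hrel (Sum.inl i) (Sum.inl j))
      · exact (chainB_pred (eGB n) (fun _ _ => eGB_vert) (fun _ _ => eGB_horiz)
          (fun j => m (Sum.inr j))).1 (fun i j => hrel (Sum.inr i) (Sum.inr j))
      · intro j hj hp
        have hj1 : j < 2*n-1 := by omega
        have hj2 : j < 2*n+1 := by omega
        have hj3 : j + 2 < 2*n+1 := by omega
        constructor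
        · have := (hrel (Sum.inr ⟨j, hj1⟩) (Sum.inl ⟨j, hj2⟩)).1
            (eG_cross_vert.2 ⟨rfl, hp⟩)
          rwa [nseq_of_lt _ hj1, nseq_of_lt _ hj2]
        · have := (hrel (Sum.inr ⟨j, hj1⟩) (Sum.inl ⟨j+2, hj3⟩)).2
            (eG_cross_horiz.2 ⟨rfl, hp⟩)
          rwa [nseq_of_lt _ hj1, nseq_of_lt _ hj3]
    · rintro ⟨hpos, hA, hB, hg⟩
      refine ⟨hpos, ?_⟩
      rintro (i | i) (j | j)
      · exact (chainA_pred (eGA n) (fun _ _ => eGA_vert) (fun _ _ => eGA_horiz)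
          (fun x => m (Sum.inl x))).2 hA i j
      · exact ⟨fun hc => absurd hc eG_cross_vert', fun hc => absurd hc eG_cross_horiz'⟩
      · constructor
        · intro hc
          obtain ⟨hij, hp⟩ := eG_cross_vert.1 hc
          rw [← nseq_fin (fun x => m (Sum.inr x)) i,
            ← nseq_fin (fun x => m (Sum.inl x)) j, hij]
          exact (hg i.val (by omega) hp).1
        · intro hc
          obtain ⟨hij, hp⟩ := eG_cross_horiz.1 hc
          rw [← nseq_fin (fun x => m (Sum.inr x)) i,
            ← nseq_fin (fun x => m (Sum.inl x)) j, hij]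
          exact (hg i.val (by omega) hp).2
      · exact (chainB_pred (eGB n) (fun _ _ => eGB_vert) (fun _ _ => eGB_horiz)
          (fun x => m (Sum.inr x))).2 hB i j
  · intro m _
    rw [Fintype.prod_sum_type]
    congr 1
    · rw [← prod_weight k1 (fun i => m (Sum.inl i))]
      exact Finset.prod_congr rfl fun i _ => by rw [Sum.elim_inl, fillG_eGA]
    · rw [← prod_weight k3 (fun j => m (Sum.inr j))]
      exact Finset.prod_congr rfl fun j _ => by rw [Sum.elim_inr, fillG_eGB]
end JT

namespace JT
open Finset

lemma k1_succ (i : ℕ) : k1 (i+1) = k3 i := by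
  unfold k1 k3
  rcases Nat.mod_two_eq_zero_or_one i with h | h
  · rw [if_neg (by omega), if_pos h]
  · rw [if_pos (by omega), if_neg (by omega)]

lemma k3_succ (i : ℕ) : k3 (i+1) = k1 i := by
  unfold k1 k3
  rcases Nat.mod_two_eq_zero_or_one i with h | h
  · rw [if_neg (by omega), if_pos h]
  · rw [if_pos (by omega), if_neg (by omega)]

lemma W_congr (κ : ℕ → ℕ) {x y : ℕ → ℕ} (L : ℕ) (h : ∀ i, i < L → x i = y i) :
    W κ x L = W κ y L := by
  unfold W
  exact Finset.prod_congr rfl fun i hi => by rw [h i (Finset.mem_range.1 hi)]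

/-- The fundamental weight identity for the tail swap. -/
lemma weight_swap {n : ℕ} (hn : 1 ≤ n) (a b : ℕ → ℕ) {r : ℕ} (hr : r < 2*n) :
    W k3 (swS a b r) (2*n) * W k1 (swU a b r) (2*n)
      = W k1 a (2*n+1) * W k3 b (2*n-1) := by
  unfold W
  have hsplitS : Finset.range (2*n) = Finset.Ico 0 r ∪ Finset.Ico r (2*n) := by
    rw [Finset.range_eq_Ico, Finset.Ico_union_Ico_eq_Ico (by omega) (by omega)]
  have hsplitU : Finset.range (2*n) = Finset.Ico 0 (r+1) ∪ Finset.Ico (r+1) (2*n) := by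
    rw [Finset.range_eq_Ico, Finset.Ico_union_Ico_eq_Ico (by omega) (by omega)]
  have hdS : Disjoint (Finset.Ico 0 r) (Finset.Ico r (2*n)) := by
    apply Finset.Ico_disjoint_Ico_consecutive
  have hdU : Disjoint (Finset.Ico 0 (r+1)) (Finset.Ico (r+1) (2*n)) := by
    apply Finset.Ico_disjoint_Ico_consecutive
  have e1 : ∏ i ∈ Finset.Ico 0 r, (((swS a b r i : ℕ) : ℝ) ^ k3 i)⁻¹
      = ∏ i ∈ Finset.Ico 0 r, (((b i : ℕ) : ℝ) ^ k3 i)⁻¹ :=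
    Finset.prod_congr rfl fun i hi => by
      rw [swS_lt a b r i (Finset.mem_Ico.1 hi).2]
  have e2 : ∏ i ∈ Finset.Ico r (2*n), (((swS a b r i : ℕ) : ℝ) ^ k3 i)⁻¹
      = ∏ i ∈ Finset.Ico (r+1) (2*n+1), (((a i : ℕ) : ℝ) ^ k1 i)⁻¹ := by
    rw [Finset.prod_Ico_eq_prod_range, Finset.prod_Ico_eq_prod_range]
    have hlen : 2*n - r = 2*n + 1 - (r+1) := by omega
    rw [← hlen]
    refine Finset.prod_congr rfl fun i _ => ?_
    rw [swS_ge a b r (r+i) (by omega), (k1_succ (r+i)).symm,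
      show r+1+i = r+i+1 from by omega]
  have e3 : ∏ i ∈ Finset.Ico 0 (r+1), (((swU a b r i : ℕ) : ℝ) ^ k1 i)⁻¹
      = ∏ i ∈ Finset.Ico 0 (r+1), (((a i : ℕ) : ℝ) ^ k1 i)⁻¹ :=
    Finset.prod_congr rfl fun i hi => by
      rw [swU_le a b r i (by have := (Finset.mem_Ico.1 hi).2; omega)]
  have e4 : ∏ i ∈ Finset.Ico (r+1) (2*n), (((swU a b r i : ℕ) : ℝ) ^ k1 i)⁻¹
      = ∏ i ∈ Finset.Ico r (2*n-1), (((b i : ℕ) : ℝ) ^ k3 i)⁻¹ := by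
    rw [Finset.prod_Ico_eq_prod_range, Finset.prod_Ico_eq_prod_range]
    have hlen : 2*n - (r+1) = 2*n - 1 - r := by omega
    rw [← hlen]
    refine Finset.prod_congr rfl fun i _ => ?_
    rw [swU_gt a b r (r+1+i) (by omega)]
    have : k1 (r+1+i) = k3 (r+1+i-1) := by
      rw [show r+1+i-1 = r+i from by omega, ← k1_succ (r+i), show r+i+1 = r+1+i from by omega]
    rw [this, show r+1+i-1 = r+i from by omega]
  have PS : ∏ i ∈ Finset.range (2*n), (((swS a b r i : ℕ) : ℝ) ^ k3 i)⁻¹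
      = (∏ i ∈ Finset.Ico 0 r, (((b i : ℕ) : ℝ) ^ k3 i)⁻¹) *
        (∏ i ∈ Finset.Ico (r+1) (2*n+1), (((a i : ℕ) : ℝ) ^ k1 i)⁻¹) := by
    rw [hsplitS, Finset.prod_union hdS, e1, e2]
  have PU : ∏ i ∈ Finset.range (2*n), (((swU a b r i : ℕ) : ℝ) ^ k1 i)⁻¹
      = (∏ i ∈ Finset.Ico 0 (r+1), (((a i : ℕ) : ℝ) ^ k1 i)⁻¹) *
        (∏ i ∈ Finset.Ico r (2*n-1), (((b i : ℕ) : ℝ) ^ k3 i)⁻¹) := by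
    rw [hsplitU, Finset.prod_union hdU, e3, e4]
  rw [PS, PU]
  have eb : (∏ i ∈ Finset.Ico 0 r, (((b i : ℕ) : ℝ) ^ k3 i)⁻¹) *
      (∏ i ∈ Finset.Ico r (2*n-1), (((b i : ℕ) : ℝ) ^ k3 i)⁻¹)
      = ∏ i ∈ Finset.range (2*n-1), (((b i : ℕ) : ℝ) ^ k3 i)⁻¹ := by
    rw [Finset.range_eq_Ico, ← Finset.Ico_union_Ico_eq_Ico (by omega : (0:ℕ) ≤ r) (by omega : r ≤ 2*n-1),
      Finset.prod_union (Finset.Ico_disjoint_Ico_consecutive _ _ _)]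
  have ea : (∏ i ∈ Finset.Ico 0 (r+1), (((a i : ℕ) : ℝ) ^ k1 i)⁻¹) *
      (∏ i ∈ Finset.Ico (r+1) (2*n+1), (((a i : ℕ) : ℝ) ^ k1 i)⁻¹)
      = ∏ i ∈ Finset.range (2*n+1), (((a i : ℕ) : ℝ) ^ k1 i)⁻¹ := by
    rw [Finset.range_eq_Ico, ← Finset.Ico_union_Ico_eq_Ico (by omega : (0:ℕ) ≤ r+1) (by omega : r+1 ≤ 2*n+1),
      Finset.prod_union (Finset.Ico_disjoint_Ico_consecutive _ _ _)]
  calc (∏ i ∈ Finset.Ico 0 r, (((b i : ℕ) : ℝ) ^ k3 i)⁻¹) *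
        (∏ i ∈ Finset.Ico (r+1) (2*n+1), (((a i : ℕ) : ℝ) ^ k1 i)⁻¹) *
        ((∏ i ∈ Finset.Ico 0 (r+1), (((a i : ℕ) : ℝ) ^ k1 i)⁻¹) *
        (∏ i ∈ Finset.Ico r (2*n-1), (((b i : ℕ) : ℝ) ^ k3 i)⁻¹))
      = ((∏ i ∈ Finset.Ico 0 (r+1), (((a i : ℕ) : ℝ) ^ k1 i)⁻¹) *
        (∏ i ∈ Finset.Ico (r+1) (2*n+1), (((a i : ℕ) : ℝ) ^ k1 i)⁻¹)) *
        ((∏ i ∈ Finset.Ico 0 r, (((b i : ℕ) : ℝ) ^ k3 i)⁻¹) *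
        (∏ i ∈ Finset.Ico r (2*n-1), (((b i : ℕ) : ℝ) ^ k3 i)⁻¹)) := by ring
    _ = _ := by rw [ea, eb]
end JT

namespace JT
open Finset

def toFin {L M : ℕ} (hM : 0 < M) (x : ℕ → ℕ) : Fin L → Fin M :=
  fun i => ⟨min (x i.val) (M-1), by omega⟩

lemma nseq_lt_M {L M : ℕ} (hM : 0 < M) (a : Fin L → Fin M) (i : ℕ) : nseq a i < M := by
  unfold nseq
  split
  · exact (a _).isLt
  · exact hM

lemma nseq_toFin {L M : ℕ} (hM : 0 < M) (x : ℕ → ℕ) (hx : ∀ t, t < L → x t < M) :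
    ∀ t, t < L → nseq (toFin (L := L) hM x) t = x t := by
  intro t ht
  rw [nseq_of_lt _ ht]
  simp only [toFin]
  have := hx t ht
  omega

lemma nseq_pos {L M : ℕ} (a : Fin L → Fin M) (hpos : ∀ i, 1 ≤ (a i : ℕ)) :
    ∀ t, t < L → 1 ≤ nseq a t := by
  intro t ht
  rw [nseq_of_lt _ ht]
  exact hpos _

lemma PAseq_congr {L : ℕ} {x y : ℕ → ℕ} (h : ∀ i, i < L → x i = y i) :
    PAseq L x ↔ PAseq L y := by
  unfold PAseq
  apply forall_congr'
  intro i
  constructor <;> intro hp hi <;>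
    [rw [← h i (by omega), ← h (i+1) hi]; rw [h i (by omega), h (i+1) hi]] <;> exact hp hi

lemma PBseq_congr {L : ℕ} {x y : ℕ → ℕ} (h : ∀ i, i < L → x i = y i) :
    PBseq L x ↔ PBseq L y := by
  unfold PBseq
  apply forall_congr'
  intro i
  constructor <;> intro hp hi <;>
    [rw [← h i (by omega), ← h (i+1) hi]; rw [h i (by omega), h (i+1) hi]] <;> exact hp hi

lemma Gcross_congr {n : ℕ} (hn : 1 ≤ n) {a a' b b' : ℕ → ℕ}
    (ha : ∀ i, i < 2*n+1 → a i = a' i) (hb : ∀ j, j < 2*n-1 → b j = b' j) :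
    Gcross n a b ↔ Gcross n a' b' := by
  unfold Gcross
  apply forall_congr'
  intro j
  constructor <;> intro hp hj hjp <;>
    [rw [← ha j (by omega), ← ha (j+2) (by omega), ← hb j (by omega)];
     rw [ha j (by omega), ha (j+2) (by omega), hb j (by omega)]] <;> exact hp hj hjp

lemma crossAt_congr {n : ℕ} (hn : 1 ≤ n) {a a' b b' : ℕ → ℕ}
    (ha : ∀ i, i < 2*n+1 → a i = a' i) (hb : ∀ j, j < 2*n-1 → b j = b' j)
    {r : ℕ} (hr : r < 2*n) :
    CrossAt n a b r ↔ CrossAt n a' b' r := by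
  unfold CrossAt
  have ea1 : a (r+1) = a' (r+1) := ha _ (by omega)
  have ea0 : a r = a' r := ha _ (by omega)
  have eb1 : b (r-1) = b' (r-1) := hb _ (by omega)
  constructor <;> rintro ⟨h1, h2⟩ <;> refine ⟨fun hp => ?_, fun hp => ?_⟩
  · obtain ⟨x1, x2⟩ := h1 hp
    exact ⟨fun h => by rw [← ea1, ← eb1]; exact x1 h,
      fun h => by rw [← ea0, ← hb r (by omega)]; exact x2 h⟩
  · obtain ⟨x1, x2⟩ := h2 hp
    exact ⟨by rw [← ea1, ← eb1]; exact x1,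
      fun h => by rw [← ea0, ← hb r (by omega)]; exact x2 h⟩
  · obtain ⟨x1, x2⟩ := h1 hp
    exact ⟨fun h => by rw [ea1, eb1]; exact x1 h,
      fun h => by rw [ea0, hb r (by omega)]; exact x2 h⟩
  · obtain ⟨x1, x2⟩ := h2 hp
    exact ⟨by rw [ea1, eb1]; exact x1,
      fun h => by rw [ea0, hb r (by omega)]; exact x2 h⟩

lemma uncrossAt_congr {n : ℕ} {s s' u u' : ℕ → ℕ}
    (hs : ∀ i, i < 2*n → s i = s' i) (hu : ∀ i, i < 2*n → u i = u' i)
    {r : ℕ} (hr : r < 2*n) :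
    UncrossAt n s u r ↔ UncrossAt n s' u' r := by
  unfold UncrossAt
  have es0 : s r = s' r := hs _ hr
  have es1 : s (r-1) = s' (r-1) := hs _ (by omega)
  have eu0 : u r = u' r := hu _ hr
  constructor <;> rintro ⟨h1, h2⟩ <;> refine ⟨fun hp => ?_, fun hp => ?_⟩
  · obtain ⟨x1, x2⟩ := h1 hp
    exact ⟨by rw [← es0, ← eu0]; exact x1,
      fun ha hb => by rw [← es1, ← hu (r+1) (by omega)]; exact x2 ha hb⟩
  · obtain ⟨x1, x2⟩ := h2 hp
    exact ⟨by rw [← es0, ← eu0]; exact x1,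
      fun hb => by rw [← es1, ← hu (r+1) (by omega)]; exact x2 hb⟩
  · obtain ⟨x1, x2⟩ := h1 hp
    exact ⟨by rw [es0, eu0]; exact x1,
      fun ha hb => by rw [es1, hu (r+1) (by omega)]; exact x2 ha hb⟩
  · obtain ⟨x1, x2⟩ := h2 hp
    exact ⟨by rw [es0, eu0]; exact x1,
      fun hb => by rw [es1, hu (r+1) (by omega)]; exact x2 hb⟩

lemma swS_congr {n : ℕ} {x x' y y' : ℕ → ℕ}
    (hx : ∀ t, t < 2*n+1 → x t = x' t) (hy : ∀ t, t < 2*n-1 → y t = y' t)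
    {r : ℕ} (hr : r < 2*n) : ∀ t, t < 2*n → swS x y r t = swS x' y' r t := by
  intro t ht
  unfold swS
  split
  · exact hy t (by omega)
  · exact hx (t+1) (by omega)

lemma swU_congr {n : ℕ} {x x' y y' : ℕ → ℕ}
    (hx : ∀ t, t < 2*n+1 → x t = x' t) (hy : ∀ t, t < 2*n-1 → y t = y' t)
    {r : ℕ} (hr : r < 2*n) : ∀ t, t < 2*n → swU x y r t = swU x' y' r t := by
  intro t ht
  unfold swU
  split
  · exact hx t (by omega)
  · exact hy (t-1) (by omega)

lemma unA_congr {n : ℕ} {s s' u u' : ℕ → ℕ}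
    (hs : ∀ t, t < 2*n → s t = s' t) (hu : ∀ t, t < 2*n → u t = u' t)
    {r : ℕ} (hr : r < 2*n) : ∀ t, t < 2*n+1 → unA s u r t = unA s' u' r t := by
  intro t ht
  unfold unA
  split
  · exact hu t (by omega)
  · exact hs (t-1) (by omega)

lemma unB_congr {n : ℕ} {s s' u u' : ℕ → ℕ}
    (hs : ∀ t, t < 2*n → s t = s' t) (hu : ∀ t, t < 2*n → u t = u' t)
    {r : ℕ} (hr : r < 2*n) : ∀ t, t < 2*n-1 → unB s u r t = unB s' u' r t := by
  intro t ht
  unfold unB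
  split
  · exact hs t (by omega)
  · exact hu (t+1) (by omega)

open scoped Classical in
/-- Largest crossing point. -/
noncomputable def Rc (n : ℕ) (x y : ℕ → ℕ) : ℕ := Nat.findGreatest (CrossAt n x y) (2*n-1)

open scoped Classical in
/-- Largest uncrossing point. -/
noncomputable def Ru (n : ℕ) (s u : ℕ → ℕ) : ℕ := Nat.findGreatest (UncrossAt n s u) (2*n-1)

open scoped Classical in
lemma Rc_lt {n : ℕ} (hn : 1 ≤ n) (x y : ℕ → ℕ) : Rc n x y < 2*n := by
  unfold Rc
  exact lt_of_le_of_lt (Nat.findGreatest_le _) (by omega)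

open scoped Classical in
lemma Ru_lt {n : ℕ} (hn : 1 ≤ n) (s u : ℕ → ℕ) : Ru n s u < 2*n := by
  unfold Ru
  exact lt_of_le_of_lt (Nat.findGreatest_le _) (by omega)

open scoped Classical in
lemma Rc_cross {n : ℕ} (hn : 1 ≤ n) {x y : ℕ → ℕ}
    (ha : PAseq (2*n+1) x) (hb : PBseq (2*n-1) y) (hg : ¬ Gcross n x y) :
    CrossAt n x y (Rc n x y) := by
  have : ∃ r, r < 2*n ∧ CrossAt n x y r := by
    by_contra hc
    push_neg at hc
    exact hg (gcross_of_no_crossAt hn ha hb hc)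
  obtain ⟨r0, hr0, hcr⟩ := this
  unfold Rc
  exact Nat.findGreatest_spec (m := r0) (by omega) hcr

open scoped Classical in
lemma Rc_max {n : ℕ} (hn : 1 ≤ n) {x y : ℕ → ℕ} {r' : ℕ}
    (h1 : Rc n x y < r') (h2 : r' < 2*n) : ¬ CrossAt n x y r' := by
  unfold Rc at h1
  exact Nat.findGreatest_is_greatest h1 (by omega)

open scoped Classical in
lemma Ru_uncross {n : ℕ} (hn : 1 ≤ n) {s u : ℕ → ℕ}
    (hs : PBseq (2*n) s) (hu : PAseq (2*n) u) :
    UncrossAt n s u (Ru n s u) := by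
  obtain ⟨r0, hr0, hcr⟩ := exists_uncrossAt hn hs hu
  unfold Ru
  exact Nat.findGreatest_spec (m := r0) (by omega) hcr

open scoped Classical in
lemma Ru_max {n : ℕ} (hn : 1 ≤ n) {s u : ℕ → ℕ} {r' : ℕ}
    (h1 : Ru n s u < r') (h2 : r' < 2*n) : ¬ UncrossAt n s u r' := by
  unfold Ru at h1
  exact Nat.findGreatest_is_greatest h1 (by omega)

open scoped Classical in
lemma Ru_eq {n : ℕ} (hn : 1 ≤ n) {s u x y : ℕ → ℕ} {R : ℕ} (hR : R < 2*n)
    (hx : PAseq (2*n+1) x) (hy : PBseq (2*n-1) y)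
    (hs : ∀ t, t < 2*n → s t = swS x y R t) (hu : ∀ t, t < 2*n → u t = swU x y R t)
    (hmax : ∀ r', R < r' → r' < 2*n → ¬ CrossAt n x y r') :
    Ru n s u = R := by
  have hU : UncrossAt n s u R :=
    (uncrossAt_congr hs hu hR).2 (uncrossAt_swap hR hx hy)
  have hge : R ≤ Ru n s u := by
    unfold Ru
    exact Nat.le_findGreatest (by omega) hU
  refine le_antisymm ?_ hge
  by_contra hc
  push_neg at hc
  have hlt : Ru n s u < 2*n := Ru_lt hn s u
  have hU2 : UncrossAt n s u (Ru n s u) := by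
    unfold Ru
    exact Nat.findGreatest_spec (m := R) (P := UncrossAt n s u) (by omega) hU
  have := (uncrossAt_congr hs hu hlt).1 hU2
  rw [uncrossAt_swap_iff hc hlt] at this
  exact hmax _ hc hlt this

open scoped Classical in
lemma Rc_eq {n : ℕ} (hn : 1 ≤ n) {a b s u : ℕ → ℕ} {R : ℕ} (hR : R < 2*n)
    (hs : PBseq (2*n) s) (hu : PAseq (2*n) u)
    (ha : ∀ t, t < 2*n+1 → a t = unA s u R t) (hb : ∀ t, t < 2*n-1 → b t = unB s u R t)
    (hmax : ∀ r', R < r' → r' < 2*n → ¬ UncrossAt n s u r') :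
    Rc n a b = R := by
  have hC : CrossAt n a b R :=
    (crossAt_congr hn ha hb hR).2 (crossAt_unswap hR hs hu)
  have hge : R ≤ Rc n a b := by
    unfold Rc
    exact Nat.le_findGreatest (by omega) hC
  refine le_antisymm ?_ hge
  by_contra hc
  push_neg at hc
  have hlt : Rc n a b < 2*n := Rc_lt hn a b
  have hC2 : CrossAt n a b (Rc n a b) := by
    unfold Rc
    exact Nat.findGreatest_spec (m := R) (P := CrossAt n a b) (by omega) hC
  have := (crossAt_congr hn ha hb hlt).1 hC2
  rw [crossAt_unswap_iff hc hlt] at this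
  exact hmax _ hc hlt this
end JT

namespace JT
open Finset

open scoped Classical in
lemma key_swap (n M : ℕ) (hn : 1 ≤ n) (hM : 0 < M) :
    ∑ p ∈ Finset.univ.filter (fun p : (Fin (2*n+1) → Fin M) × (Fin (2*n-1) → Fin M) =>
        (((∀ i, 1 ≤ (p.1 i : ℕ)) ∧ PAseq (2*n+1) (nseq p.1)) ∧
         ((∀ i, 1 ≤ (p.2 i : ℕ)) ∧ PBseq (2*n-1) (nseq p.2))) ∧
        ¬ Gcross n (nseq p.1) (nseq p.2)),
      W k1 (nseq p.1) (2*n+1) * W k3 (nseq p.2) (2*n-1)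
    = ∑ q ∈ Finset.univ.filter (fun q : (Fin (2*n) → Fin M) × (Fin (2*n) → Fin M) =>
        ((∀ i, 1 ≤ (q.1 i : ℕ)) ∧ PBseq (2*n) (nseq q.1)) ∧
        ((∀ i, 1 ≤ (q.2 i : ℕ)) ∧ PAseq (2*n) (nseq q.2))),
      W k3 (nseq q.1) (2*n) * W k1 (nseq q.2) (2*n) := by
  classical
  have hltS : ∀ (a : Fin (2*n+1) → Fin M) (b : Fin (2*n-1) → Fin M) (r t : ℕ),
      swS (nseq a) (nseq b) r t < M := by
    intro a b r t; unfold swS; split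
    · exact nseq_lt_M hM b _
    · exact nseq_lt_M hM a _
  have hltU : ∀ (a : Fin (2*n+1) → Fin M) (b : Fin (2*n-1) → Fin M) (r t : ℕ),
      swU (nseq a) (nseq b) r t < M := by
    intro a b r t; unfold swU; split
    · exact nseq_lt_M hM a _
    · exact nseq_lt_M hM b _
  have hltA : ∀ (s u : Fin (2*n) → Fin M) (r t : ℕ), unA (nseq s) (nseq u) r t < M := by
    intro s u r t; unfold unA; split
    · exact nseq_lt_M hM u _
    · exact nseq_lt_M hM s _
  have hltB : ∀ (s u : Fin (2*n) → Fin M) (r t : ℕ), unB (nseq s) (nseq u) r t < M := by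
    intro s u r t; unfold unB; split
    · exact nseq_lt_M hM s _
    · exact nseq_lt_M hM u _
  refine Finset.sum_bij'
    (fun p _ => (toFin hM (swS (nseq p.1) (nseq p.2) (Rc n (nseq p.1) (nseq p.2))),
                 toFin hM (swU (nseq p.1) (nseq p.2) (Rc n (nseq p.1) (nseq p.2)))))
    (fun q _ => (toFin hM (unA (nseq q.1) (nseq q.2) (Ru n (nseq q.1) (nseq q.2))),
                 toFin hM (unB (nseq q.1) (nseq q.2) (Ru n (nseq q.1) (nseq q.2)))))
    ?_ ?_ ?_ ?_ ?_
  · -- maps into RHS filter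
    rintro ⟨a, b⟩ hp
    simp only [Finset.mem_filter, Finset.mem_univ, true_and] at hp
    obtain ⟨⟨⟨pos1, hx⟩, ⟨pos2, hy⟩⟩, hg⟩ := hp
    set x := nseq a with hxdef
    set y := nseq b with hydef
    set R := Rc n x y with hRdef
    have hR : R < 2*n := Rc_lt hn x y
    have hCr : CrossAt n x y R := Rc_cross hn hx hy hg
    obtain ⟨hPS, hPU⟩ := swap_patterns hR hx hy hCr
    have hnS : ∀ t, t < 2*n → nseq (toFin (L := 2*n) hM (swS x y R)) t = swS x y R t :=
      nseq_toFin hM _ (fun t _ => hltS a b R t)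
    have hnU : ∀ t, t < 2*n → nseq (toFin (L := 2*n) hM (swU x y R)) t = swU x y R t :=
      nseq_toFin hM _ (fun t _ => hltU a b R t)
    simp only [Finset.mem_filter, Finset.mem_univ, true_and]
    refine ⟨⟨?_, (PBseq_congr hnS).2 hPS⟩, ⟨?_, (PAseq_congr hnU).2 hPU⟩⟩
    · intro i
      have hpos : 1 ≤ swS x y R i.val := by
        unfold swS; split_ifs with h
        · exact nseq_pos b pos2 i.val (by omega)
        · exact nseq_pos a pos1 (i.val+1) (by omega)
      have hlt : swS x y R i.val < M := hltS a b R i.val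
      simp only [toFin]
      exact le_min hpos (by omega)
    · intro i
      have hpos : 1 ≤ swU x y R i.val := by
        unfold swU; split_ifs with h
        · exact nseq_pos a pos1 i.val (by omega)
        · exact nseq_pos b pos2 (i.val-1) (by omega)
      have hlt : swU x y R i.val < M := hltU a b R i.val
      simp only [toFin]
      exact le_min hpos (by omega)
  · -- inverse maps into LHS filter
    rintro ⟨s, u⟩ hq
    simp only [Finset.mem_filter, Finset.mem_univ, true_and] at hq
    obtain ⟨⟨pos1, hs⟩, ⟨pos2, hu⟩⟩ := hq
    set S := nseq s with hsd
    set U := nseq u with hud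
    set R := Ru n S U with hRd
    have hR : R < 2*n := Ru_lt hn S U
    have hUn : UncrossAt n S U R := Ru_uncross hn hs hu
    obtain ⟨hPA, hPB⟩ := unswap_patterns hR hs hu hUn
    have hnA : ∀ t, t < 2*n+1 → nseq (toFin (L := 2*n+1) hM (unA S U R)) t = unA S U R t :=
      nseq_toFin hM _ (fun t _ => hltA s u R t)
    have hnB : ∀ t, t < 2*n-1 → nseq (toFin (L := 2*n-1) hM (unB S U R)) t = unB S U R t :=
      nseq_toFin hM _ (fun t _ => hltB s u R t)
    simp only [Finset.mem_filter, Finset.mem_univ, true_and]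
    refine ⟨⟨⟨?_, (PAseq_congr hnA).2 hPA⟩, ⟨?_, (PBseq_congr hnB).2 hPB⟩⟩, ?_⟩
    · intro i
      have hpos : 1 ≤ unA S U R i.val := by
        unfold unA; split_ifs with h
        · exact nseq_pos u pos2 i.val (by omega)
        · exact nseq_pos s pos1 (i.val-1) (by omega)
      have hlt : unA S U R i.val < M := hltA s u R i.val
      simp only [toFin]
      exact le_min hpos (by omega)
    · intro i
      have hpos : 1 ≤ unB S U R i.val := by
        unfold unB; split_ifs with h
        · exact nseq_pos s pos1 i.val (by omega)
        · exact nseq_pos u pos2 (i.val+1) (by omega)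
      have hlt : unB S U R i.val < M := hltB s u R i.val
      simp only [toFin]
      exact le_min hpos (by omega)
    · -- unswapped pair is violating
      intro hgc
      have hgc' : Gcross n (unA S U R) (unB S U R) :=
        (Gcross_congr hn hnA hnB).1 hgc
      exact no_crossAt_of_gcross hgc' R hR (crossAt_unswap hR hs hu)
  · -- left inverse
    rintro ⟨a, b⟩ hp
    dsimp only
    simp only [Finset.mem_filter, Finset.mem_univ, true_and] at hp
    obtain ⟨⟨⟨pos1, hx⟩, ⟨pos2, hy⟩⟩, hg⟩ := hp
    set x := nseq a with hxdef
    set y := nseq b with hydef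
    set R := Rc n x y with hRdef
    have hR : R < 2*n := Rc_lt hn x y
    have hnS : ∀ t, t < 2*n → nseq (toFin (L := 2*n) hM (swS x y R)) t = swS x y R t :=
      nseq_toFin hM _ (fun t _ => hltS a b R t)
    have hnU : ∀ t, t < 2*n → nseq (toFin (L := 2*n) hM (swU x y R)) t = swU x y R t :=
      nseq_toFin hM _ (fun t _ => hltU a b R t)
    have hRu : Ru n (nseq (toFin (L := 2*n) hM (swS x y R)))
        (nseq (toFin (L := 2*n) hM (swU x y R))) = R :=
      Ru_eq hn hR hx hy hnS hnU (fun r' h1 h2 => Rc_max hn h1 h2)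
    have hA : ∀ i : Fin (2*n+1),
        toFin (L := 2*n+1) hM (unA (nseq (toFin (L := 2*n) hM (swS x y R)))
          (nseq (toFin (L := 2*n) hM (swU x y R))) R) i = a i := by
      intro i
      apply Fin.ext
      have e1 := unA_congr (n := n) hnS hnU hR i.val (by omega)
      have e2 := unA_swS x y R i.val
      simp only [toFin]
      rw [e1, e2, hxdef, nseq_fin]
      have := (a i).isLt
      omega
    have hB : ∀ j : Fin (2*n-1),
        toFin (L := 2*n-1) hM (unB (nseq (toFin (L := 2*n) hM (swS x y R)))
          (nseq (toFin (L := 2*n) hM (swU x y R))) R) j = b j := by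
      intro j
      apply Fin.ext
      have e1 := unB_congr (n := n) hnS hnU hR j.val (by omega)
      have e2 := unB_swU x y R j.val
      simp only [toFin]
      rw [e1, e2, hydef, nseq_fin]
      have := (b j).isLt
      omega
    rw [Prod.ext_iff]
    constructor
    · funext i
      rw [hRu]
      exact hA i
    · funext j
      rw [hRu]
      exact hB j
  · -- right inverse
    rintro ⟨s, u⟩ hq
    dsimp only
    simp only [Finset.mem_filter, Finset.mem_univ, true_and] at hq
    obtain ⟨⟨pos1, hs⟩, ⟨pos2, hu⟩⟩ := hq
    set S := nseq s with hsd
    set U := nseq u with hud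
    set R := Ru n S U with hRd
    have hR : R < 2*n := Ru_lt hn S U
    have hnA : ∀ t, t < 2*n+1 → nseq (toFin (L := 2*n+1) hM (unA S U R)) t = unA S U R t :=
      nseq_toFin hM _ (fun t _ => hltA s u R t)
    have hnB : ∀ t, t < 2*n-1 → nseq (toFin (L := 2*n-1) hM (unB S U R)) t = unB S U R t :=
      nseq_toFin hM _ (fun t _ => hltB s u R t)
    have hRc : Rc n (nseq (toFin (L := 2*n+1) hM (unA S U R)))
        (nseq (toFin (L := 2*n-1) hM (unB S U R))) = R :=
      Rc_eq hn hR hs hu hnA hnB (fun r' h1 h2 => Ru_max hn h1 h2)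
    have hS : ∀ i : Fin (2*n),
        toFin (L := 2*n) hM (swS (nseq (toFin (L := 2*n+1) hM (unA S U R)))
          (nseq (toFin (L := 2*n-1) hM (unB S U R))) R) i = s i := by
      intro i
      apply Fin.ext
      have e1 := swS_congr (n := n) hnA hnB hR i.val (by omega)
      have e2 := swS_unA S U R i.val
      simp only [toFin]
      rw [e1, e2, hsd, nseq_fin]
      have := (s i).isLt
      omega
    have hU : ∀ i : Fin (2*n),
        toFin (L := 2*n) hM (swU (nseq (toFin (L := 2*n+1) hM (unA S U R)))
          (nseq (toFin (L := 2*n-1) hM (unB S U R))) R) i = u i := by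
      intro i
      apply Fin.ext
      have e1 := swU_congr (n := n) hnA hnB hR i.val (by omega)
      have e2 := swU_unB S U R i.val
      simp only [toFin]
      rw [e1, e2, hud, nseq_fin]
      have := (u i).isLt
      omega
    rw [Prod.ext_iff]
    constructor
    · funext i
      rw [hRc]
      exact hS i
    · funext i
      rw [hRc]
      exact hU i
  · -- weights
    rintro ⟨a, b⟩ hp
    dsimp only
    simp only [Finset.mem_filter, Finset.mem_univ, true_and] at hp
    obtain ⟨⟨⟨pos1, hx⟩, ⟨pos2, hy⟩⟩, hg⟩ := hp
    set x := nseq a with hxdef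
    set y := nseq b with hydef
    set R := Rc n x y with hRdef
    have hR : R < 2*n := Rc_lt hn x y
    have hnS : ∀ t, t < 2*n → nseq (toFin (L := 2*n) hM (swS x y R)) t = swS x y R t :=
      nseq_toFin hM _ (fun t _ => hltS a b R t)
    have hnU : ∀ t, t < 2*n → nseq (toFin (L := 2*n) hM (swU x y R)) t = swU x y R t :=
      nseq_toFin hM _ (fun t _ => hltU a b R t)
    rw [W_congr k3 (2*n) hnS, W_congr k1 (2*n) hnU, weight_swap hn x y hR]
end JT

namespace JT
open Finset

open scoped Classical in
lemma zetaG_pairs (n M : ℕ) (hn : 1 ≤ n) :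
    zetaTrunc (Gdiagram n) (fillG n) M
    = ∑ p ∈ Finset.univ.filter (fun p : (Fin (2*n+1) → Fin M) × (Fin (2*n-1) → Fin M) =>
        (((∀ i, 1 ≤ (p.1 i : ℕ)) ∧ PAseq (2*n+1) (nseq p.1)) ∧
         ((∀ i, 1 ≤ (p.2 i : ℕ)) ∧ PBseq (2*n-1) (nseq p.2))) ∧
        Gcross n (nseq p.1) (nseq p.2)),
      W k1 (nseq p.1) (2*n+1) * W k3 (nseq p.2) (2*n-1) := by
  classical
  rw [zetaG_eq n M hn]
  refine Finset.sum_bij'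
    (fun m _ => ((fun i => m (Sum.inl i)), (fun j => m (Sum.inr j))))
    (fun p _ => Sum.elim p.1 p.2) ?_ ?_ ?_ ?_ ?_
  · intro m hm
    simp only [Finset.mem_filter, Finset.mem_univ, true_and] at hm ⊢
    obtain ⟨hpos, hPA, hPB, hg⟩ := hm
    exact ⟨⟨⟨fun i => hpos _, hPA⟩, ⟨fun j => hpos _, hPB⟩⟩, hg⟩
  · intro p hp
    simp only [Finset.mem_filter, Finset.mem_univ, true_and] at hp ⊢
    obtain ⟨⟨⟨pos1, hPA⟩, ⟨pos2, hPB⟩⟩, hg⟩ := hp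
    exact ⟨fun x => by cases x <;> simp [pos1, pos2], hPA, hPB, hg⟩
  · intro m _
    funext x
    cases x <;> rfl
  · intro p _
    rfl
  · intro m _
    rfl

open scoped Classical in
lemma main_id (n M : ℕ) (hn : 1 ≤ n) (hM : 1 ≤ M) :
    zetaTrunc (Gdiagram n) (fillG n) M
    = zetaTrunc (stairA n) (fillAB 1 3) M * zetaTrunc (stairB (n-1)) (fillAB 3 1) M
      - zetaTrunc (stairS n) (fillAB 3 1) M * zetaTrunc (stairSstar n) (fillAB 1 3) M := by
  classical
  have hAB : zetaTrunc (stairA n) (fillAB 1 3) M * zetaTrunc (stairB (n-1)) (fillAB 3 1) M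
      = ∑ p ∈ Finset.univ.filter
          (fun p : (Fin (2*n+1) → Fin M) × (Fin (2*n-1) → Fin M) =>
          ((∀ i, 1 ≤ (p.1 i : ℕ)) ∧ PAseq (2*n+1) (nseq p.1)) ∧
          ((∀ i, 1 ≤ (p.2 i : ℕ)) ∧ PBseq (2*n-1) (nseq p.2))),
        W k1 (nseq p.1) (2*n+1) * W k3 (nseq p.2) (2*n-1) := by
    rw [zetaA_eq n M, zetaB_eq (n-1) M, show 2*(n-1)+1 = 2*n-1 from by omega,
      Finset.sum_mul_sum]
    rw [← Finset.sum_product']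
    refine Finset.sum_bij' (fun p _ => p) (fun p _ => p) ?_ ?_
      (fun _ _ => rfl) (fun _ _ => rfl) (fun _ _ => rfl)
    · intro p hp
      simp only [Finset.mem_product, Finset.mem_filter, Finset.mem_univ, true_and] at hp ⊢
      exact hp
    · intro p hp
      simp only [Finset.mem_product, Finset.mem_filter, Finset.mem_univ, true_and] at hp ⊢
      exact hp
  have hSU : zetaTrunc (stairS n) (fillAB 3 1) M * zetaTrunc (stairSstar n) (fillAB 1 3) M
      = ∑ q ∈ Finset.univ.filter
          (fun q : (Fin (2*n) → Fin M) × (Fin (2*n) → Fin M) =>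
          ((∀ i, 1 ≤ (q.1 i : ℕ)) ∧ PBseq (2*n) (nseq q.1)) ∧
          ((∀ i, 1 ≤ (q.2 i : ℕ)) ∧ PAseq (2*n) (nseq q.2))),
        W k3 (nseq q.1) (2*n) * W k1 (nseq q.2) (2*n) := by
    rw [zetaS_eq n M, zetaSs_eq n M, Finset.sum_mul_sum]
    rw [← Finset.sum_product']
    refine Finset.sum_bij' (fun p _ => p) (fun p _ => p) ?_ ?_
      (fun _ _ => rfl) (fun _ _ => rfl) (fun _ _ => rfl)
    · intro p hp
      simp only [Finset.mem_product, Finset.mem_filter, Finset.mem_univ, true_and] at hp ⊢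
      exact hp
    · intro p hp
      simp only [Finset.mem_product, Finset.mem_filter, Finset.mem_univ, true_and] at hp ⊢
      exact hp
  have hsplit := Finset.sum_filter_add_sum_filter_not
    (Finset.univ.filter (fun p : (Fin (2*n+1) → Fin M) × (Fin (2*n-1) → Fin M) =>
      ((∀ i, 1 ≤ (p.1 i : ℕ)) ∧ PAseq (2*n+1) (nseq p.1)) ∧
      ((∀ i, 1 ≤ (p.2 i : ℕ)) ∧ PBseq (2*n-1) (nseq p.2))))
    (fun p => Gcross n (nseq p.1) (nseq p.2))
    (fun p => W k1 (nseq p.1) (2*n+1) * W k3 (nseq p.2) (2*n-1))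
  rw [Finset.filter_filter, Finset.filter_filter] at hsplit
  rw [zetaG_pairs n M hn, hAB, hSU, ← key_swap n M hn (by omega), ← hsplit]
  ring
end JT

/-- The `2 × 2` Jacobi–Trudi identity for the glued stairs:
`G_{1,3}(n) = A_{1,3}(n)·B_{1,3}(n-1) - S_{1,3}(n)·S⋆_{1,3}(n)` for `n ≥ 1`. -/
theorem schurZeta_G_jacobiTrudi (n : ℕ) (hn : 1 ≤ n)
    (a13 b13 s13 ss13 g13 : ℝ)
    (hA : Tendsto (fun M => zetaTrunc (stairA n) (fillAB 1 3) M) atTop (nhds a13))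
    (hB : Tendsto (fun M => zetaTrunc (stairB (n - 1)) (fillAB 3 1) M) atTop (nhds b13))
    (hS : Tendsto (fun M => zetaTrunc (stairS n) (fillAB 3 1) M) atTop (nhds s13))
    (hSs : Tendsto (fun M => zetaTrunc (stairSstar n) (fillAB 1 3) M) atTop (nhds ss13))
    (hG : Tendsto (fun M => zetaTrunc (Gdiagram n) (fillG n) M) atTop (nhds g13)) :
    g13 = a13 * b13 - s13 * ss13 := by
  have heq : ∀ᶠ M in atTop, zetaTrunc (Gdiagram n) (fillG n) M =
      zetaTrunc (stairA n) (fillAB 1 3) M * zetaTrunc (stairB (n-1)) (fillAB 3 1) M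
      - zetaTrunc (stairS n) (fillAB 3 1) M * zetaTrunc (stairSstar n) (fillAB 1 3) M :=
    Filter.eventually_atTop.2 ⟨1, fun M hM => JT.main_id n M hn hM⟩
  have h2 : Tendsto (fun M => zetaTrunc (Gdiagram n) (fillG n) M) atTop
      (nhds (a13 * b13 - s13 * ss13)) :=
    Filter.Tendsto.congr' (Filter.EventuallyEq.symm heq) ((hA.mul hB).sub (hS.mul hSs))
  exact tendsto_nhds_unique hG h2
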